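/- arXiv:1612.03622 — 4 statements merged into one kernel-verified Lean document; each statement's English description precedes it below -/
import Mathlib

section
/- Let q ∈ L¹[0,1] be real-valued, t ∈ [0,π), and suppose λ₀(t) is the smallest eigenvalue of the quasi-periodic problem -y'' + qy = λy, y(1)=e^{it}y(0), y'(1)=e^{it}y'(0). If λ₀(t) ≥ t² + ∫₀¹ q(x) dx, then λ₀(t) = t² + ∫₀¹ q(x) dx and y(x) = e^{itx} is a corresponding eigenfunction. -/
open MeasureTheory intervalIntegral Complex

/-- The (real-valued) Rayleigh quotient of `y` for the operator `-y'' + q y` on `[0,1]`. -/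
noncomputable def rayleighQuotientR (q : ℝ → ℝ) (y : ℝ → ℂ) : ℝ :=
  (∫ x in (0:ℝ)..1,
      ((-(starRingEnd ℂ) (y x) * deriv (deriv y) x).re + q x * ‖y x‖^2)) /
  (∫ x in (0:ℝ)..1, ‖y x‖^2)

/-- Quasi-periodic boundary conditions for parameter `t`. -/
def QuasiPeriodicBC (t : ℝ) (y : ℝ → ℂ) : Prop :=
  y 1 = Complex.exp (Complex.I * t) * y 0 ∧ deriv y 1 = Complex.exp (Complex.I * t) * deriv y 0

/-- `y` is an eigenfunction of `L_t(q)` with eigenvalue `lam`. -/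
def IsEigenfunction (q : ℝ → ℝ) (t lam : ℝ) (y : ℝ → ℂ) : Prop :=
  ContDiff ℝ 2 y ∧ (∃ x ∈ Set.Icc (0:ℝ) 1, y x ≠ 0) ∧ QuasiPeriodicBC t y ∧
  ∀ᵐ x, x ∈ Set.Icc (0:ℝ) 1 → -deriv (deriv y) x + (q x : ℂ) * y x = (lam : ℂ) * y x

/-- `lam` is an eigenvalue of `L_t(q)`. -/
def IsEigenvalue (q : ℝ → ℝ) (t lam : ℝ) : Prop := ∃ y, IsEigenfunction q t lam y

/-- `lam0` is the smallest eigenvalue of `L_t(q)`. -/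
def IsFirstEigenvalue (q : ℝ → ℝ) (t lam0 : ℝ) : Prop :=
  IsEigenvalue q t lam0 ∧ ∀ lam, IsEigenvalue q t lam → lam0 ≤ lam

/- ### Auxiliary material -/

noncomputable def ee (t : ℝ) : ℝ → ℂ := fun x => Complex.exp (Complex.I * t * x)

lemma hasDerivAt_ee (t x : ℝ) : HasDerivAt (ee t) (Complex.I * t * ee t x) x := by
  have h0 : HasDerivAt (fun z : ℂ => Complex.I * t * z) (Complex.I * t) (x : ℂ) := by
    simpa using ((hasDerivAt_id (x : ℂ)).const_mul (Complex.I * t))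
  have h : HasDerivAt (fun z : ℂ => Complex.exp (Complex.I * t * z))
      (Complex.exp (Complex.I * t * x) * (Complex.I * t)) (x : ℂ) :=
    (Complex.hasDerivAt_exp _).comp (x : ℂ) h0
  have h2 : HasDerivAt (ee t) (ee t x * (Complex.I * t)) x := h.comp_ofReal
  simpa [mul_comm] using h2

lemma contDiff_ee (t : ℝ) : ContDiff ℝ 2 (ee t) :=
  (Complex.contDiff_exp.comp ((contDiff_const.mul Complex.ofRealCLM.contDiff))).of_le le_top

lemma contDiff_deriv_two {u : ℝ → ℝ} (hu : ContDiff ℝ 2 u) : ContDiff ℝ 1 (deriv u) := by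
  have h2 : ContDiff ℝ ((1:WithTop ℕ∞)+1) u := by
    convert hu using 2
    exact one_add_one_eq_two
  exact (contDiff_succ_iff_deriv.mp h2).2.2

lemma hasDerivAt_y {t : ℝ} {u : ℝ → ℝ} (hu : ContDiff ℝ 2 u) (x : ℝ) :
    HasDerivAt (fun x => ee t x * (u x : ℂ))
      (ee t x * (Complex.I * t * u x + deriv u x)) x := by
  have h2 : HasDerivAt (fun x : ℝ => ((u x : ℝ) : ℂ)) ((deriv u x : ℝ) : ℂ) x :=
    ((hu.differentiable (by norm_num) x).hasDerivAt).ofReal_comp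
  have := (hasDerivAt_ee t x).mul h2
  simp only [Pi.mul_def] at this
  exact this.congr_deriv (by ring)

lemma deriv_y {t : ℝ} {u : ℝ → ℝ} (hu : ContDiff ℝ 2 u) :
    deriv (fun x => ee t x * (u x : ℂ)) = fun x => ee t x * (Complex.I * t * u x + deriv u x) :=
  funext fun x => (hasDerivAt_y hu x).deriv

lemma deriv2_y {t : ℝ} {u : ℝ → ℝ} (hu : ContDiff ℝ 2 u) (x : ℝ) :
    deriv (deriv (fun x => ee t x * (u x : ℂ))) x =
      ee t x * (Complex.I * t * (Complex.I * t * u x + deriv u x)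
        + (Complex.I * t * deriv u x + deriv (deriv u) x)) := by
  rw [deriv_y hu]
  have hdu := contDiff_deriv_two hu
  have h2 : HasDerivAt (fun x : ℝ => (Complex.I * t * u x + deriv u x : ℂ))
      (Complex.I * t * deriv u x + deriv (deriv u) x) x := by
    have ha : HasDerivAt (fun x : ℝ => ((u x : ℝ) : ℂ)) ((deriv u x : ℝ) : ℂ) x :=
      ((hu.differentiable (by norm_num) x).hasDerivAt).ofReal_comp
    have hb : HasDerivAt (fun x : ℝ => ((deriv u x : ℝ) : ℂ)) ((deriv (deriv u) x : ℝ) : ℂ) x :=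
      ((hdu.differentiable one_ne_zero x).hasDerivAt).ofReal_comp
    exact (ha.const_mul (Complex.I * t)).add hb
  have := (hasDerivAt_ee t x).mul h2
  simp only [Pi.mul_def] at this
  rw [this.deriv]
  ring

lemma abs_ee (t x : ℝ) : ‖ee t x‖ = 1 := by
  simp [ee, Complex.norm_exp]

lemma integrand_eq {t : ℝ} {u : ℝ → ℝ} (q : ℝ → ℝ) (hu : ContDiff ℝ 2 u) (x : ℝ) :
    (-(starRingEnd ℂ) (ee t x * (u x : ℂ)) * deriv (deriv (fun x => ee t x * (u x : ℂ))) x).re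
      + q x * ‖ee t x * (u x : ℂ)‖^2
    = t^2 * u x^2 - u x * deriv (deriv u) x + q x * u x^2 := by
  rw [deriv2_y hu]
  have habs : ‖ee t x * (u x : ℂ)‖^2 = u x ^ 2 := by
    rw [norm_mul, abs_ee, one_mul, Complex.norm_real, Real.norm_eq_abs, _root_.sq_abs]
  rw [habs]
  have hconj : (starRingEnd ℂ) (ee t x) * ee t x = 1 := by
    rw [mul_comm, Complex.mul_conj, Complex.normSq_eq_norm_sq, abs_ee]
    norm_num
  have key : -(starRingEnd ℂ) (ee t x * (u x : ℂ)) *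
      (ee t x * (Complex.I * t * (Complex.I * t * u x + deriv u x)
        + (Complex.I * t * deriv u x + deriv (deriv u) x)))
      = -((u x : ℂ) * (Complex.I * t * (Complex.I * t * u x + deriv u x)
        + (Complex.I * t * deriv u x + deriv (deriv u) x))) := by
    rw [map_mul, Complex.conj_ofReal]
    rw [show -((starRingEnd ℂ) (ee t x) * (u x : ℂ)) *
      (ee t x * (Complex.I * t * (Complex.I * t * u x + deriv u x)
        + (Complex.I * t * deriv u x + deriv (deriv u) x)))
      = ((starRingEnd ℂ) (ee t x) * ee t x) * (-((u x : ℂ) * (Complex.I * t * (Complex.I * t * u x + deriv u x)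
        + (Complex.I * t * deriv u x + deriv (deriv u) x)))) by ring, hconj, one_mul]
  rw [key]
  simp [Complex.mul_re, Complex.add_re, Complex.mul_im, Complex.add_im]
  ring

lemma denom_pos {u : ℝ → ℝ} (hc : Continuous u) (h0 : u 0 = 1) :
    0 < ∫ x in (0:ℝ)..1, u x^2 := by
  have ht : Filter.Tendsto u (nhds 0) (nhds 1) := by
    have := hc.continuousAt (x := (0:ℝ))
    rwa [ContinuousAt, h0] at this
  have hev : ∀ᶠ y in nhds (0:ℝ), 1/2 < u y :=
    ht.eventually (eventually_gt_nhds (by norm_num))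
  rw [Metric.eventually_nhds_iff] at hev
  obtain ⟨δ, hδ, hball⟩ := hev
  set b := min (δ/2) 1 with hb
  have hb0 : 0 < b := by positivity
  have hb1 : b ≤ 1 := min_le_right _ _
  have hbδ : b < δ := lt_of_le_of_lt (min_le_left _ _) (by linarith)
  have hsplit : (∫ x in (0:ℝ)..b, u x^2) + (∫ x in b..1, u x^2) = ∫ x in (0:ℝ)..1, u x^2 :=
    intervalIntegral.integral_add_adjacent_intervals
      ((hc.pow 2).intervalIntegrable 0 b) ((hc.pow 2).intervalIntegrable b 1)
  have h2 : (0:ℝ) ≤ ∫ x in b..1, u x^2 :=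
    intervalIntegral.integral_nonneg hb1 (fun x _ => sq_nonneg _)
  have h1 : b * (1/4) ≤ ∫ x in (0:ℝ)..b, u x^2 := by
    have := intervalIntegral.integral_mono_on (le_of_lt hb0)
      (_root_.intervalIntegrable_const (μ := volume) (c := (1/4:ℝ)))
      ((hc.pow 2).intervalIntegrable 0 b)
      (fun x hx => by
        have hx' : 1/2 < u x := by
          apply hball
          rw [Real.dist_eq, abs_sub_lt_iff]
          constructor <;> [skip; linarith [hx.1]]
          linarith [hx.2, hbδ]
        simp only [Pi.pow_apply]
        nlinarith)
    simpa [mul_comm] using this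
  have : 0 < b * (1/4) := by positivity
  linarith

lemma rayleigh_bound {q : ℝ → ℝ} (hqi : IntervalIntegrable q volume 0 1) {t lam0 : ℝ}
    (hvar : ∀ y : ℝ → ℂ, ContDiff ℝ 2 y → (∃ x ∈ Set.Icc (0:ℝ) 1, y x ≠ 0) →
      QuasiPeriodicBC t y → lam0 ≤ rayleighQuotientR q y)
    (u : ℝ → ℝ) (hu : ContDiff ℝ 2 u) (hu0 : u 0 = 1) (hu1 : u 1 = 1)
    (hd0 : deriv u 0 = 0) (hd1 : deriv u 1 = 0) :
    lam0 * ∫ x in (0:ℝ)..1, u x^2 ≤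
      t^2 * (∫ x in (0:ℝ)..1, u x^2) + (∫ x in (0:ℝ)..1, q x * u x^2)
        + ∫ x in (0:ℝ)..1, (deriv u x)^2 := by
  set y : ℝ → ℂ := fun x => ee t x * (u x : ℂ) with hy
  have hcy : ContDiff ℝ 2 y := (contDiff_ee t).mul (Complex.ofRealCLM.contDiff.comp hu)
  have hee0 : ee t 0 = 1 := by simp [ee]
  have hee1 : ee t 1 = Complex.exp (Complex.I * t) := by simp [ee]
  have hne : ∃ x ∈ Set.Icc (0:ℝ) 1, y x ≠ 0 := ⟨0, by norm_num, by simp [hy, hee0, hu0]⟩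
  have hbc : QuasiPeriodicBC t y := by
    constructor
    · simp [hy, hee0, hee1, hu0, hu1]
    · rw [hy, deriv_y hu]
      simp [hee0, hee1, hu0, hu1, hd0, hd1]
  have hv := hvar y hcy hne hbc
  have hcu := hu.continuous
  have hcdu : Continuous (deriv u) := hu.continuous_deriv (by norm_num)
  have hcddu : Continuous (deriv (deriv u)) := (contDiff_deriv_two hu).continuous_deriv le_rfl
  have hD : 0 < ∫ x in (0:ℝ)..1, u x^2 := denom_pos hcu hu0
  have hnum : (∫ x in (0:ℝ)..1,
      ((-(starRingEnd ℂ) (y x) * deriv (deriv y) x).re + q x * ‖y x‖^2))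
      = ∫ x in (0:ℝ)..1, (t^2*u x^2 - u x*deriv (deriv u) x + q x*u x^2) := by
    apply intervalIntegral.integral_congr
    intro x hx
    exact integrand_eq q hu x
  have hdenom : (∫ x in (0:ℝ)..1, ‖y x‖^2) = ∫ x in (0:ℝ)..1, u x^2 := by
    apply intervalIntegral.integral_congr
    intro x hx
    simp [hy, norm_mul, abs_ee, Complex.norm_real, _root_.sq_abs]
  rw [rayleighQuotientR, hnum, hdenom, le_div_iff₀ hD] at hv
  have hiu2 : IntervalIntegrable (fun x => u x^2) volume 0 1 := (hcu.pow 2).intervalIntegrable 0 1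
  have hiuu : IntervalIntegrable (fun x => u x * deriv (deriv u) x) volume 0 1 :=
    (hcu.mul hcddu).intervalIntegrable 0 1
  have hiq : IntervalIntegrable (fun x => q x * u x^2) volume 0 1 :=
    hqi.mul_continuousOn (hcu.pow 2).continuousOn
  have hsplit : ∫ x in (0:ℝ)..1, (t^2*u x^2 - u x*deriv (deriv u) x + q x*u x^2)
      = t^2 * (∫ x in (0:ℝ)..1, u x^2) - (∫ x in (0:ℝ)..1, u x * deriv (deriv u) x)
        + ∫ x in (0:ℝ)..1, q x * u x^2 := by
    rw [intervalIntegral.integral_add (((hiu2.const_mul _)).sub hiuu) hiq,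
      intervalIntegral.integral_sub (hiu2.const_mul _) hiuu,
      intervalIntegral.integral_const_mul]
  have hibp : (∫ x in (0:ℝ)..1, u x * deriv (deriv u) x) = - ∫ x in (0:ℝ)..1, (deriv u x)^2 := by
    have h := intervalIntegral.integral_mul_deriv_eq_deriv_mul
      (u := u) (v := deriv u) (u' := deriv u) (v' := deriv (deriv u))
      (fun x _ => (hu.differentiable (by norm_num) x).hasDerivAt)
      (fun x _ => ((contDiff_deriv_two hu).differentiable one_ne_zero x).hasDerivAt)
      (hcdu.intervalIntegrable 0 1) (hcddu.intervalIntegrable 0 1)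
    rw [hd0, hd1] at h
    simp only [mul_zero, sub_zero, zero_sub, zero_mul, sub_self] at h
    rw [h]
    congr 1
    apply intervalIntegral.integral_congr
    intro x hx
    ring
  rw [hsplit, hibp] at hv
  linarith

lemma test_zero {q : ℝ → ℝ} (hqi : IntervalIntegrable q volume 0 1) {t lam0 : ℝ}
    (hvar : ∀ y : ℝ → ℂ, ContDiff ℝ 2 y → (∃ x ∈ Set.Icc (0:ℝ) 1, y x ≠ 0) →
      QuasiPeriodicBC t y → lam0 ≤ rayleighQuotientR q y)
    (heq : lam0 = t^2 + ∫ x in (0:ℝ)..1, q x)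
    (g : ℝ → ℝ) (hg : ContDiff ℝ 2 g) (hgsupp : tsupport g ⊆ Set.Ioo 0 1) :
    (∫ x in (0:ℝ)..1, q x * g x) - (∫ x in (0:ℝ)..1, q x) * (∫ x in (0:ℝ)..1, g x) = 0 := by
  set Q : ℝ := ∫ x in (0:ℝ)..1, q x with hQdef
  have hgc : Continuous g := hg.continuous
  have hgdc : Continuous (deriv g) := hg.continuous_deriv (by norm_num)
  -- endpoint values
  have hend : ∀ z : ℝ, z ∉ Set.Ioo (0:ℝ) 1 → g z = 0 ∧ deriv g z = 0 := by
    intro z hz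
    have h0 : z ∉ tsupport g := fun h => hz (hgsupp h)
    have hev0 : g =ᶠ[nhds z] 0 :=
      Filter.eventually_of_mem ((isClosed_tsupport g).isOpen_compl.mem_nhds h0)
        (fun x hx => image_eq_zero_of_notMem_tsupport hx)
    exact ⟨image_eq_zero_of_notMem_tsupport h0, by rw [hev0.deriv_eq]; exact deriv_const z 0⟩
  obtain ⟨hg0, hd0g⟩ := hend 0 (by norm_num)
  obtain ⟨hg1, hd1g⟩ := hend 1 (by norm_num)
  -- abbreviations for the integrals
  set a : ℝ := ∫ x in (0:ℝ)..1, g x with hadef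
  set b : ℝ := ∫ x in (0:ℝ)..1, (g x)^2 with hbdef
  set c : ℝ := ∫ x in (0:ℝ)..1, q x * g x with hcdef
  set d : ℝ := ∫ x in (0:ℝ)..1, q x * (g x)^2 with hddef
  set e : ℝ := ∫ x in (0:ℝ)..1, (deriv g x)^2 with hedef
  have key : ∀ ε : ℝ, 0 ≤ 2*ε*(c - Q*a) + ε^2*(d - Q*b + e) := by
    intro ε
    set u : ℝ → ℝ := fun x => 1 + ε * g x with hudef
    have hu : ContDiff ℝ 2 u := contDiff_const.add (contDiff_const.mul hg)
    have hdu : deriv u = fun x => ε * deriv g x := by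
      funext x
      exact ((((hg.differentiable (by norm_num)) x).hasDerivAt.const_mul ε).const_add 1).deriv
    have hb := rayleigh_bound hqi hvar u hu (by simp [hudef, hg0]) (by simp [hudef, hg1])
      (by rw [hdu]; simp [hd0g]) (by rw [hdu]; simp [hd1g])
    -- expansions
    have e1 : (∫ x in (0:ℝ)..1, u x^2) = 1 + ε*(2*a) + ε^2*b := by
      have : (fun x => u x^2) = fun x => 1 + (ε*(2*g x) + ε^2*(g x^2)) := by
        funext x; simp only [hudef]; ring
      rw [this, intervalIntegral.integral_add (intervalIntegrable_const)
        (show IntervalIntegrable (fun x => ε*(2*g x) + ε^2*(g x^2)) volume 0 1 from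
          ((continuous_const.mul (continuous_const.mul hgc)).intervalIntegrable 0 1).add
          ((continuous_const.mul (hgc.pow 2)).intervalIntegrable 0 1)),
        intervalIntegral.integral_add (show IntervalIntegrable (fun x => ε*(2*g x)) volume 0 1 from
            (continuous_const.mul (continuous_const.mul hgc)).intervalIntegrable 0 1)
          (show IntervalIntegrable (fun x => ε^2*(g x^2)) volume 0 1 from
            (continuous_const.mul (hgc.pow 2)).intervalIntegrable 0 1),
        intervalIntegral.integral_const_mul, intervalIntegral.integral_const_mul,
        intervalIntegral.integral_const_mul]
      simp [hadef, hbdef]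
      ring
    have hqg : IntervalIntegrable (fun x => q x * g x) volume 0 1 :=
      hqi.mul_continuousOn hgc.continuousOn
    have hqg2 : IntervalIntegrable (fun x => q x * (g x)^2) volume 0 1 :=
      hqi.mul_continuousOn (hgc.pow 2).continuousOn
    have e2 : (∫ x in (0:ℝ)..1, q x * u x^2) = Q + ε*(2*c) + ε^2*d := by
      have : (fun x => q x * u x^2)
          = fun x => q x + (ε*(2*(q x * g x)) + ε^2*(q x * (g x)^2)) := by
        funext x; simp only [hudef]; ring
      rw [this, intervalIntegral.integral_add hqi
        (((hqg.const_mul 2).const_mul ε).add (hqg2.const_mul (ε^2))),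
        intervalIntegral.integral_add ((hqg.const_mul 2).const_mul ε) (hqg2.const_mul (ε^2)),
        intervalIntegral.integral_const_mul, intervalIntegral.integral_const_mul,
        intervalIntegral.integral_const_mul, ← hQdef, ← hcdef, ← hddef]
      ring
    have e3 : (∫ x in (0:ℝ)..1, (deriv u x)^2) = ε^2*e := by
      rw [hdu]
      have : (fun x => (ε * deriv g x)^2) = fun x => ε^2 * (deriv g x)^2 := by
        funext x; ring
      rw [this, intervalIntegral.integral_const_mul]
    rw [e1, e2, e3, heq] at hb
    ring_nf at hb ⊢
    linarith
  -- conclude c - Q*a = 0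
  show c - Q * a = 0
  by_contra hB
  set B := c - Q*a with hBdef
  set C := d - Q*b + e with hCdef
  set M := |C| + 1 with hMdef
  have hM : 0 < M := by positivity
  have hCM : C ≤ M := le_of_lt (lt_of_le_of_lt (le_abs_self C) (by simp [hMdef]))
  have h := key (-B/M)
  have hB2 : 0 < B^2 := by positivity
  have hexp : 2*(-B/M)*B + (-B/M)^2*C = (-2*B^2*M + B^2*C)/M^2 := by
    field_simp
  rw [hexp] at h
  have h2 : 0 ≤ -2*B^2*M + B^2*C := by
    rcases div_nonneg_iff.mp h with ⟨h,_⟩|⟨_,h2⟩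
    · exact h
    · nlinarith
  nlinarith

/-- if the first eigenvalue `λ₀(t)` of the quasi-periodic problem (which
satisfies the variational principle) obeys `λ₀(t) ≥ t² + ∫₀¹ q`, then equality holds and
`x ↦ exp(i t x)` is a corresponding eigenfunction. -/
theorem first_eigenvalue_eq_of_ge (q : ℝ → ℝ)
    (hq : IntegrableOn q (Set.Icc (0:ℝ) 1)) (t : ℝ) (ht : t ∈ Set.Ico 0 Real.pi)
    (lam0 : ℝ) (hfirst : IsFirstEigenvalue q t lam0)
    (hvar : ∀ y : ℝ → ℂ, ContDiff ℝ 2 y → (∃ x ∈ Set.Icc (0:ℝ) 1, y x ≠ 0) →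
      QuasiPeriodicBC t y → lam0 ≤ rayleighQuotientR q y)
    (hge : lam0 ≥ t^2 + ∫ x in (0:ℝ)..1, q x) :
    lam0 = t^2 + (∫ x in (0:ℝ)..1, q x) ∧
    IsEigenfunction q t lam0 (fun x : ℝ => Complex.exp (Complex.I * t * x)) := by
  have hqi : IntervalIntegrable q volume 0 1 := by
    rw [intervalIntegrable_iff]
    exact hq.mono_set (by rw [Set.uIoc_of_le zero_le_one]; exact Set.Ioc_subset_Icc_self)
  set Q : ℝ := ∫ x in (0:ℝ)..1, q x with hQdef
  -- Step 1 : lam0 = t² + Q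
  have h1 := rayleigh_bound hqi hvar (fun _ => 1) contDiff_const rfl rfl
    (by simp) (by simp)
  simp only [one_pow, mul_one, intervalIntegral.integral_const, smul_eq_mul, sub_zero,
    deriv_const'] at h1
  have hone : (∫ x in (0:ℝ)..1, (1:ℝ)) = 1 := by simp
  have heq : lam0 = t^2 + Q := by
    apply le_antisymm _ hge
    have h0 : (∫ x in (0:ℝ)..1, (0:ℝ)^2) = 0 := by simp
    calc lam0 = lam0 * ∫ x in (0:ℝ)..1, (1:ℝ)^2 := by simp
    _ ≤ t^2 * (∫ x in (0:ℝ)..1, (1:ℝ)^2) + (∫ x in (0:ℝ)..1, q x * (1:ℝ)^2)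
        + ∫ x in (0:ℝ)..1, ((0:ℝ))^2 := by
        have := rayleigh_bound hqi hvar (fun _ => 1) contDiff_const rfl rfl (by simp) (by simp)
        simpa using this
    _ = t^2 + Q := by simp [hQdef]
  -- Step 2 : q = Q almost everywhere on (0,1)
  have key : ∀ᵐ x, x ∈ Set.Ioo (0:ℝ) 1 → q x - Q = 0 := by
    apply IsOpen.ae_eq_zero_of_integral_contDiff_smul_eq_zero isOpen_Ioo
    · apply IntegrableOn.locallyIntegrableOn
      exact (hq.mono_set Set.Ioo_subset_Icc_self).sub
        (integrableOn_const measure_Ioo_lt_top.ne)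
    · intro g hgsm hgcs hgsupp
      have hB := test_zero hqi hvar heq g (hgsm.of_le (by
        rw [show ((2:WithTop ℕ∞)) = ((2:ℕ∞) : WithTop ℕ∞) from rfl, WithTop.coe_le_coe]
        exact le_top)) hgsupp
      have h2 : (∫ x, g x • (q x - Q)) = ∫ x in Set.Ioc (0:ℝ) 1, g x • (q x - Q) :=
        (setIntegral_eq_integral_of_forall_compl_eq_zero (fun x hx => by
          have hg0 : g x = 0 := image_eq_zero_of_notMem_tsupport
            (fun h => hx (Set.Ioo_subset_Ioc_self (hgsupp h)))
          simp [hg0])).symm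
      rw [h2, ← intervalIntegral.integral_of_le zero_le_one]
      have hqg : IntervalIntegrable (fun x => q x * g x) volume 0 1 :=
        hqi.mul_continuousOn hgsm.continuous.continuousOn
      have h3 : (∫ x in (0:ℝ)..1, g x • (q x - Q))
          = (∫ x in (0:ℝ)..1, q x * g x) - Q * ∫ x in (0:ℝ)..1, g x := by
        have : (fun x => g x • (q x - Q)) = fun x => q x * g x - Q * g x := by
          funext x; simp [smul_eq_mul]; ring
        rw [this, intervalIntegral.integral_sub hqg
          (show IntervalIntegrable (fun x => Q * g x) volume 0 1 from
            (continuous_const.mul hgsm.continuous).intervalIntegrable 0 1),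
          intervalIntegral.integral_const_mul]
      rw [h3]
      linarith [hB]
  -- endpoints are null
  have hnull : ∀ᵐ (x : ℝ), x ∉ ({0, 1} : Set ℝ) := by
    have h01 : volume ({0, 1} : Set ℝ) = 0 := (Set.toFinite _).measure_zero volume
    exact (measure_eq_zero_iff_ae_notMem (μ := volume)).mp h01
  -- assemble the eigenfunction statement
  have hdee : deriv (ee t) = fun x => Complex.I * t * ee t x :=
    funext fun x => (hasDerivAt_ee t x).deriv
  have hddee : ∀ x, deriv (deriv (ee t)) x = Complex.I * t * (Complex.I * t * ee t x) := by
    intro x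
    rw [hdee]
    exact ((hasDerivAt_ee t x).const_mul (Complex.I * t)).deriv
  have hef : IsEigenfunction q t lam0 (ee t) := by
    refine ⟨contDiff_ee t, ⟨0, by norm_num, by simp [ee]⟩, ⟨?_, ?_⟩, ?_⟩
    · simp [ee]
    · rw [hdee]
      simp only [ee, Complex.ofReal_one, mul_one, Complex.ofReal_zero, mul_zero,
        Complex.exp_zero]
      ring
    · filter_upwards [key, hnull] with x hx hnx hmem
      have hio : x ∈ Set.Ioo (0:ℝ) 1 := by
        constructor
        · exact lt_of_le_of_ne hmem.1 (fun h => hnx (by simp [← h]))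
        · exact lt_of_le_of_ne hmem.2 (fun h => hnx (by simp [h]))
      have hqx : q x = Q := by linarith [hx hio]
      rw [hddee, hqx, heq]
      push_cast
      linear_combination (-(t:ℂ)^2 * ee t x) * Complex.I_sq
  exact ⟨heq, hef⟩
end

section
/- Let q ∈ L¹[0,1] be real-valued and t ∈ [0,π). If λ₀(t), the first eigenvalue of the quasi-periodic problem L_t(q), satisfies λ₀(t) ≥ t² + ∫₀¹ q(x) dx, then q(x) = ∫₀¹ q(s) ds almost everywhere on [0,1]. -/
open MeasureTheory intervalIntegral Complex


open MeasureTheory intervalIntegral Complex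

open scoped ContDiff

private lemma hasDerivAt_exp_it (t x : ℝ) :
    HasDerivAt (fun x : ℝ => Complex.exp (Complex.I * t * x))
      (Complex.I * t * Complex.exp (Complex.I * t * x)) x := by
  have h1 : HasDerivAt (fun x : ℝ => Complex.I * t * x) (Complex.I * t) x := by
    simpa using Complex.ofRealCLM.hasDerivAt.const_mul (Complex.I * (t : ℂ))
  simpa [mul_comm] using h1.cexp

private lemma rayleigh_test (q : ℝ → ℝ) (t lam0 : ℝ)
    (hvar : ∀ y : ℝ → ℂ, ContDiff ℝ 2 y → (∃ x ∈ Set.Icc (0:ℝ) 1, y x ≠ 0) →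
      QuasiPeriodicBC t y → lam0 ≤ rayleighQuotientR q y)
    (g : ℝ → ℝ) (hg : ContDiff ℝ ∞ g)
    (hg0 : g 0 = 0) (hg1 : g 1 = 0) (hdg0 : deriv g 0 = 0) (hdg1 : deriv g 1 = 0)
    (ε : ℝ) (hD : 0 < ∫ x in (0:ℝ)..1, (1 + ε * g x)^2) :
    lam0 * ∫ x in (0:ℝ)..1, (1 + ε * g x)^2 ≤
      ∫ x in (0:ℝ)..1, (t^2 * (1 + ε * g x)^2 - ε * (1 + ε * g x) * deriv (deriv g) x
        + q x * (1 + ε * g x)^2) := by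
  set u : ℝ → ℝ := fun x => 1 + ε * g x with hu_def
  set y : ℝ → ℂ := fun x => Complex.exp (Complex.I * t * x) * ((u x : ℝ) : ℂ) with hy_def
  have hgd : ContDiff ℝ ∞ (deriv g) := by
    simpa using hg.iterate_deriv 1
  have hgdd : ContDiff ℝ ∞ (deriv (deriv g)) := by
    simpa using hgd.iterate_deriv 1
  have h2top : (2 : WithTop ℕ∞) ≤ ∞ := by norm_cast
  have h1top : (1 : WithTop ℕ∞) ≤ ∞ := by norm_cast
  have hu : ∀ x, HasDerivAt u (ε * deriv g x) x := fun x => by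
    exact (((hg.differentiable (by simp)) x).hasDerivAt.const_mul ε).const_add 1
  have hdg : ∀ x, HasDerivAt (fun x => ε * deriv g x) (ε * deriv (deriv g) x) x := fun x =>
    ((hgd.differentiable (by simp)) x).hasDerivAt.const_mul ε
  set d1 : ℝ → ℂ := fun x =>
    Complex.exp (Complex.I * t * x) * (Complex.I * t * ((u x : ℝ) : ℂ) + ((ε * deriv g x : ℝ) : ℂ))
    with hd1_def
  set d2 : ℝ → ℂ := fun x =>
    Complex.exp (Complex.I * t * x) * (Complex.I * t * Complex.I * t * ((u x : ℝ) : ℂ)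
      + 2 * (Complex.I * t) * ((ε * deriv g x : ℝ) : ℂ) + ((ε * deriv (deriv g) x : ℝ) : ℂ))
    with hd2_def
  have hy1 : ∀ x, HasDerivAt y (d1 x) x := fun x => by
    have h := (hasDerivAt_exp_it t x).fun_mul (hu x).ofReal_comp
    convert h using 1
    · rfl
    simp only [hd1_def]; push_cast; ring
  have hdy : deriv y = d1 := funext fun x => (hy1 x).deriv
  have hy2 : ∀ x, HasDerivAt d1 (d2 x) x := fun x => by
    have hw : HasDerivAt (fun x => Complex.I * t * ((u x : ℝ) : ℂ) + ((ε * deriv g x : ℝ) : ℂ))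
        (Complex.I * t * ((ε * deriv g x : ℝ) : ℂ) + ((ε * deriv (deriv g) x : ℝ) : ℂ)) x :=
      (((hu x).ofReal_comp).const_mul (Complex.I * t)).add (hdg x).ofReal_comp
    have h := (hasDerivAt_exp_it t x).fun_mul hw
    convert h using 1
    · rfl
    simp only [hd2_def]; push_cast; ring
  have hddy : deriv (deriv y) = d2 := by
    rw [hdy]; exact funext fun x => (hy2 x).deriv
  have hyc : ContDiff ℝ 2 y := by
    have h1 : ContDiff ℝ 2 (fun x : ℝ => Complex.exp (Complex.I * t * x)) := by
      apply Complex.contDiff_exp.comp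
      exact (contDiff_const.mul Complex.ofRealCLM.contDiff : ContDiff ℝ 2 fun x : ℝ => Complex.I * t * (x : ℂ))
    have h2 : ContDiff ℝ 2 (fun x : ℝ => ((u x : ℝ) : ℂ)) :=
      Complex.ofRealCLM.contDiff.comp (contDiff_const.add (contDiff_const.mul (hg.of_le h2top)))
    exact h1.mul h2
  have hy0 : y 0 = 1 := by simp [hy_def, hu_def, hg0]
  have hBC : QuasiPeriodicBC t y := by
    constructor
    · simp [hy_def, hu_def, hg0, hg1]
    · rw [hdy]
      simp [hd1_def, hu_def, hg0, hg1, hdg0, hdg1]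
  have habs : ∀ x, ‖y x‖^2 = u x ^ 2 := by
    intro x
    have h1 : ‖Complex.exp (Complex.I*t*x)‖ = 1 := by
      rw [Complex.norm_exp]; simp
    simp [hy_def, norm_mul, h1, Complex.norm_real, _root_.sq_abs]
  have hre : ∀ x, (-(starRingEnd ℂ) (y x) * deriv (deriv y) x).re + q x * ‖y x‖^2
      = t^2 * u x^2 - ε * u x * deriv (deriv g) x + q x * u x^2 := by
    intro x
    rw [hddy, habs x]
    have h2 : (Complex.exp (Complex.I*t*x)).re^2 + (Complex.exp (Complex.I*t*x)).im^2 = 1 := by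
      have habs1 : ‖Complex.exp (Complex.I*t*x)‖ = 1 := by
        rw [Complex.norm_exp]; simp
      have := Complex.sq_norm (Complex.exp (Complex.I*t*x))
      rw [habs1] at this
      simpa [Complex.normSq_apply, sq, eq_comm] using this
    have key : (-((starRingEnd ℂ) (Complex.exp (Complex.I*t*x) * ((u x : ℝ):ℂ))) *
        (Complex.exp (Complex.I*t*x) *
          (Complex.I * t * Complex.I * t * ((u x:ℝ):ℂ)
            + 2*(Complex.I*t)*((ε * deriv g x : ℝ):ℂ) + ((ε * deriv (deriv g) x : ℝ):ℂ)))).re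
        = t^2 * u x^2 - u x * (ε * deriv (deriv g) x) := by
      simp only [map_mul, Complex.conj_ofReal, Complex.neg_re, Complex.mul_re, Complex.mul_im,
        Complex.add_re, Complex.add_im, Complex.I_re, Complex.I_im, Complex.ofReal_re,
        Complex.ofReal_im, Complex.conj_re, Complex.conj_im, Complex.neg_im,
        Complex.re_ofNat, Complex.im_ofNat]
      linear_combination (u x^2*t^2 - u x*(ε * deriv (deriv g) x)) * h2
    simp only [hy_def, hd2_def]
    rw [key]; ring
  have hlam := hvar y hyc ⟨0, by norm_num, by rw [hy0]; norm_num⟩ hBC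
  rw [rayleighQuotientR] at hlam
  have hEq : (∫ x in (0:ℝ)..1,
      ((-(starRingEnd ℂ) (y x) * deriv (deriv y) x).re + q x * ‖y x‖^2))
      = ∫ x in (0:ℝ)..1, (t^2 * (1 + ε * g x)^2 - ε * (1 + ε * g x) * deriv (deriv g) x
        + q x * (1 + ε * g x)^2) := by
    apply intervalIntegral.integral_congr
    intro x _
    exact hre x
  have hEq2 : (∫ x in (0:ℝ)..1, ‖y x‖^2) = ∫ x in (0:ℝ)..1, (1 + ε * g x)^2 := by
    apply intervalIntegral.integral_congr
    intro x _
    exact habs x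
  rw [hEq, hEq2] at hlam
  exact (le_div_iff₀ hD).mp hlam


private lemma abstract_A_zero {A C e0 : ℝ} (he0 : 0 < e0)
    (key : ∀ e : ℝ, |e| ≤ e0 → 2*e*(-A) ≤ e^2*C) : A = 0 := by
  by_contra hA0
  have habsA : 0 < |A| := abs_pos.2 hA0
  have hCpos : (0:ℝ) < |C|+1 := by positivity
  set s := min e0 (|A|/(|C|+1)) with hs
  have hs0 : 0 < s := lt_min he0 (by positivity)
  have h1 := key s (by rw [abs_of_pos hs0]; exact min_le_left _ _)
  have h2 := key (-s) (by rw [abs_neg, abs_of_pos hs0]; exact min_le_left _ _)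
  have hsC : s*(|C|+1) ≤ |A| := by
    have hmr := min_le_right e0 (|A|/(|C|+1))
    have h3 := mul_le_mul_of_nonneg_right hmr hCpos.le
    calc s*(|C|+1) ≤ (|A|/(|C|+1))*(|C|+1) := h3
      _ = |A| := by field_simp
  have habs2 : 2*s*|A| ≤ s^2*C := by
    rcases abs_cases A with ⟨h,_⟩|⟨h,_⟩ <;> nlinarith [h1, h2]
  nlinarith [habs2, mul_le_mul_of_nonneg_left (le_abs_self C) (sq_nonneg s),
    mul_le_mul_of_nonneg_left hsC hs0.le, mul_pos hs0 habsA, sq_nonneg s, hs0]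

private lemma test_integral_zero (q : ℝ → ℝ) (hq : IntegrableOn q (Set.Icc (0:ℝ) 1))
    (t lam0 : ℝ)
    (hvar : ∀ y : ℝ → ℂ, ContDiff ℝ 2 y → (∃ x ∈ Set.Icc (0:ℝ) 1, y x ≠ 0) →
      QuasiPeriodicBC t y → lam0 ≤ rayleighQuotientR q y)
    (hlam : lam0 = t^2 + ∫ x in (0:ℝ)..1, q x)
    (g : ℝ → ℝ) (hg : ContDiff ℝ ∞ g)
    (hg0 : g 0 = 0) (hg1 : g 1 = 0) (hdg0 : deriv g 0 = 0) (hdg1 : deriv g 1 = 0) :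
    ∫ x in (0:ℝ)..1, (q x - ∫ s in (0:ℝ)..1, q s) * g x = 0 := by
  set Q := ∫ s in (0:ℝ)..1, q s with hQ
  have h1top : (1 : WithTop ℕ∞) ≤ ∞ := by norm_cast
  have hq' : IntervalIntegrable q volume 0 1 := by
    apply IntegrableOn.intervalIntegrable; rwa [Set.uIcc_of_le zero_le_one]
  have hgc : Continuous g := hg.continuous
  have hgd : ContDiff ℝ ∞ (deriv g) := by simpa using hg.iterate_deriv 1
  have hgdd : ContDiff ℝ ∞ (deriv (deriv g)) := by simpa using hgd.iterate_deriv 1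
  have hgddc : Continuous (deriv (deriv g)) := hgdd.continuous
  obtain ⟨M, hM⟩ := isCompact_Icc.exists_bound_of_continuousOn
    (hgc.continuousOn : ContinuousOn g (Set.Icc (0:ℝ) 1))
  have hM0 : 0 ≤ M := le_trans (norm_nonneg _) (hM 0 (by norm_num))
  set ε₀ : ℝ := 1/(2*(M+1)) with hε₀
  have hε₀pos : 0 < ε₀ := by positivity
  have hqg : IntervalIntegrable (fun x => q x * g x) volume 0 1 :=
    hq'.mul_continuousOn hgc.continuousOn
  have hqg2 : IntervalIntegrable (fun x => q x * g x^2) volume 0 1 :=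
    hq'.mul_continuousOn (hgc.pow 2).continuousOn
  set Ig := ∫ x in (0:ℝ)..1, g x with hIg
  set Ig2 := ∫ x in (0:ℝ)..1, g x^2 with hIg2
  set Iqg := ∫ x in (0:ℝ)..1, q x * g x with hIqg
  set Iqg2 := ∫ x in (0:ℝ)..1, q x * g x^2 with hIqg2
  set J := ∫ x in (0:ℝ)..1, g x * deriv (deriv g) x with hJ
  have hgpp0 : ∫ x in (0:ℝ)..1, deriv (deriv g) x = 0 := by
    rw [intervalIntegral.integral_deriv_eq_sub (fun x _ => (hgd.differentiable (by simp) x))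
      (hgddc.intervalIntegrable 0 1), hdg1, hdg0, sub_zero]
  have key : ∀ ε : ℝ, |ε| ≤ ε₀ →
      2*ε*(-(Iqg - Q*Ig)) ≤ ε^2*(Iqg2 - J - Q*Ig2) := by
    intro ε hε
    have hucont : Continuous (fun x => 1 + ε * g x) := continuous_const.add (continuous_const.mul hgc)
    have hhalf : ∀ x ∈ Set.Icc (0:ℝ) 1, (1/2 : ℝ) ≤ 1 + ε * g x := by
      intro x hx
      have h1 : |ε * g x| ≤ ε₀ * M := by
        rw [abs_mul]
        exact mul_le_mul hε (hM x hx) (abs_nonneg _) hε₀pos.le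
      have h2 : ε₀ * M ≤ 1/2 := by
        rw [hε₀, div_mul_eq_mul_div, div_le_div_iff₀ (by positivity) (by norm_num)]
        nlinarith
      nlinarith [neg_abs_le (ε * g x)]
    have hDrw : ∫ x in (0:ℝ)..1, (1 + ε*g x)^2 = 1 + 2*ε*Ig + ε^2*Ig2 := by
      have e1 : Set.EqOn (fun x => (1 + ε*g x)^2)
          (fun x => 1 + (2*ε*(g x) + ε^2*(g x^2))) (Set.uIcc 0 1) := fun x _ => by ring
      rw [intervalIntegral.integral_congr e1,
        intervalIntegral.integral_add intervalIntegrable_const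
          (((hgc.intervalIntegrable 0 1).const_mul _).add ((show IntervalIntegrable (fun x => g x ^ 2) volume 0 1 from (hgc.pow 2).intervalIntegrable 0 1).const_mul _)),
        intervalIntegral.integral_add ((hgc.intervalIntegrable 0 1).const_mul _)
          ((show IntervalIntegrable (fun x => g x ^ 2) volume 0 1 from (hgc.pow 2).intervalIntegrable 0 1).const_mul _),
        intervalIntegral.integral_const_mul, intervalIntegral.integral_const_mul]
      simp [hIg, hIg2]
      ring
    have hDpos : 0 < ∫ x in (0:ℝ)..1, (1 + ε*g x)^2 := by
      have hmono : (1/4 : ℝ) ≤ ∫ x in (0:ℝ)..1, (1 + ε*g x)^2 := by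
        have := intervalIntegral.integral_mono_on (μ := volume) (a := 0) (b := 1)
          (f := fun _ => (1/4:ℝ)) (g := fun x => (1 + ε*g x)^2) zero_le_one
          intervalIntegrable_const ((hucont.pow 2).intervalIntegrable 0 1)
          (fun x hx => by nlinarith [hhalf x hx])
        simpa using this
      linarith
    have hmain := rayleigh_test q t lam0 hvar g hg hg0 hg1 hdg0 hdg1 ε hDpos
    have hN : (∫ x in (0:ℝ)..1, (t^2*(1+ε*g x)^2 - ε*(1+ε*g x)*deriv (deriv g) x + q x*(1+ε*g x)^2))
        = t^2*(1 + 2*ε*Ig + ε^2*Ig2) - (ε^2*J) + (Q + 2*ε*Iqg + ε^2*Iqg2) := by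
      have hi1 : IntervalIntegrable (fun x => t^2*(1+ε*g x)^2) volume 0 1 :=
        ((hucont.pow 2).intervalIntegrable 0 1).const_mul _
      have hi2 : IntervalIntegrable (fun x => ε*(1+ε*g x)*deriv (deriv g) x) volume 0 1 :=
        (((continuous_const.mul hucont).mul hgddc).intervalIntegrable 0 1)
      have hi3 : IntervalIntegrable (fun x => q x*(1+ε*g x)^2) volume 0 1 := by
        apply hq'.mul_continuousOn (hucont.pow 2).continuousOn
      have split1 : (∫ x in (0:ℝ)..1, (t^2*(1+ε*g x)^2 - ε*(1+ε*g x)*deriv (deriv g) x + q x*(1+ε*g x)^2))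
          = (∫ x in (0:ℝ)..1, t^2*(1+ε*g x)^2) - (∫ x in (0:ℝ)..1, ε*(1+ε*g x)*deriv (deriv g) x)
            + (∫ x in (0:ℝ)..1, q x*(1+ε*g x)^2) := by
        rw [intervalIntegral.integral_add (hi1.sub hi2) hi3, intervalIntegral.integral_sub hi1 hi2]
      have p1 : (∫ x in (0:ℝ)..1, t^2*(1+ε*g x)^2) = t^2*(1 + 2*ε*Ig + ε^2*Ig2) := by
        rw [intervalIntegral.integral_const_mul, hDrw]
      have p2 : (∫ x in (0:ℝ)..1, ε*(1+ε*g x)*deriv (deriv g) x) = ε^2*J := by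
        have e2 : Set.EqOn (fun x => ε*(1+ε*g x)*deriv (deriv g) x)
            (fun x => ε*(deriv (deriv g) x) + ε^2*(g x * deriv (deriv g) x)) (Set.uIcc 0 1) :=
          fun x _ => by ring
        rw [intervalIntegral.integral_congr e2,
          intervalIntegral.integral_add ((hgddc.intervalIntegrable 0 1).const_mul _)
            ((show IntervalIntegrable (fun x => g x * deriv (deriv g) x) volume 0 1 from (hgc.mul hgddc).intervalIntegrable 0 1).const_mul _),
          intervalIntegral.integral_const_mul, intervalIntegral.integral_const_mul, hgpp0, hJ]
        ring
      have p3 : (∫ x in (0:ℝ)..1, q x*(1+ε*g x)^2) = Q + 2*ε*Iqg + ε^2*Iqg2 := by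
        have e3 : Set.EqOn (fun x => q x * (1 + ε * g x)^2)
            (fun x => q x + (2*ε*(q x * g x) + ε^2*(q x * g x^2))) (Set.uIcc 0 1) :=
          fun x _ => by ring
        rw [intervalIntegral.integral_congr e3,
          intervalIntegral.integral_add hq' ((hqg.const_mul _).add (hqg2.const_mul _)),
          intervalIntegral.integral_add (hqg.const_mul _) (hqg2.const_mul _),
          intervalIntegral.integral_const_mul, intervalIntegral.integral_const_mul]
        rw [hQ, hIqg, hIqg2]; ring
      rw [split1, p1, p2, p3]
    rw [hlam, hDrw, hN] at hmain
    nlinarith [hmain]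
  have hA : Iqg - Q*Ig = 0 := abstract_A_zero hε₀pos key
  have hfin : ∫ x in (0:ℝ)..1, (q x - Q) * g x = Iqg - Q*Ig := by
    have e1 : Set.EqOn (fun x => (q x - Q) * g x) (fun x => q x * g x - Q * g x) (Set.uIcc 0 1) :=
      fun x _ => by ring
    rw [intervalIntegral.integral_congr e1,
      intervalIntegral.integral_sub hqg ((hgc.intervalIntegrable 0 1).const_mul Q),
      intervalIntegral.integral_const_mul]
  rw [hfin, hA]


/-- Theorem 3(a): if the first eigenvalue `λ₀(t)`, `t ∈ [0,π)`, of the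
quasi-periodic problem `L_t(q)` satisfies `λ₀(t) ≥ t² + ∫₀¹ q`, then `q` is a.e. equal to
its mean value. -/
theorem ambarzumyan_quasiperiodic_a (q : ℝ → ℝ)
    (hq : IntegrableOn q (Set.Icc (0:ℝ) 1)) (t : ℝ) (ht : t ∈ Set.Ico 0 Real.pi)
    (lam0 : ℝ) (hfirst : IsFirstEigenvalue q t lam0)
    (hvar : ∀ y : ℝ → ℂ, ContDiff ℝ 2 y → (∃ x ∈ Set.Icc (0:ℝ) 1, y x ≠ 0) →
      QuasiPeriodicBC t y → lam0 ≤ rayleighQuotientR q y)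
    (hge : lam0 ≥ t^2 + ∫ x in (0:ℝ)..1, q x) :
    ∀ᵐ x, x ∈ Set.Icc (0:ℝ) 1 → q x = ∫ s in (0:ℝ)..1, q s := by
  have hq' : IntervalIntegrable q volume 0 1 := by
    apply IntegrableOn.intervalIntegrable; rwa [Set.uIcc_of_le zero_le_one]
  set Q := ∫ s in (0:ℝ)..1, q s with hQ
  have hle : lam0 ≤ t^2 + Q := by
    have h0 := rayleigh_test q t lam0 hvar (fun _ => 0) contDiff_const rfl rfl
      (by simp) (by simp) 0 (by norm_num)
    have e : Set.EqOn
        (fun x => t^2*(1 + (0:ℝ)*(fun _ => (0:ℝ)) x)^2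
          - 0*(1 + 0*(fun _ => (0:ℝ)) x)*deriv (deriv (fun _ => (0:ℝ))) x
          + q x*(1 + 0*(fun _ => (0:ℝ)) x)^2)
        (fun x => t^2 + q x) (Set.uIcc (0:ℝ) 1) := fun x _ => by norm_num
    rw [intervalIntegral.integral_congr e,
      intervalIntegral.integral_add intervalIntegrable_const hq'] at h0
    simpa [← hQ] using h0
  have hlam : lam0 = t^2 + Q := le_antisymm hle hge
  have hqQ : IntegrableOn (fun x => q x - Q) (Set.Icc (0:ℝ) 1) volume := by
    exact hq.sub (integrableOn_const (by rw [Real.volume_Icc]; norm_num))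
  have hloc : LocallyIntegrableOn (fun x => q x - Q) (Set.Ioo (0:ℝ) 1) volume :=
    (hqQ.mono_set Set.Ioo_subset_Icc_self).locallyIntegrableOn
  have key : ∀ᵐ x, x ∈ Set.Ioo (0:ℝ) 1 → q x - Q = 0 := by
    apply (isOpen_Ioo : IsOpen (Set.Ioo (0:ℝ) 1)).ae_eq_zero_of_integral_contDiff_smul_eq_zero hloc
    intro g hgs hgc hgsupp
    have h0n : (0:ℝ) ∉ tsupport g := fun h => by simpa using hgsupp h
    have h1n : (1:ℝ) ∉ tsupport g := fun h => by simpa using hgsupp h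
    have hg0 : g 0 = 0 := image_eq_zero_of_notMem_tsupport h0n
    have hg1 : g 1 = 0 := image_eq_zero_of_notMem_tsupport h1n
    have hdg0 : deriv g 0 = 0 :=
      Function.notMem_support.mp (fun hs => h0n (support_deriv_subset hs))
    have hdg1 : deriv g 1 = 0 :=
      Function.notMem_support.mp (fun hs => h1n (support_deriv_subset hs))
    have hz := test_integral_zero q hq t lam0 hvar hlam g hgs hg0 hg1 hdg0 hdg1
    rw [← setIntegral_eq_integral_of_forall_compl_eq_zero
      (s := Set.Ioo (0:ℝ) 1) (fun x hx => by
        simp [image_eq_zero_of_notMem_tsupport (fun h => hx (hgsupp h))])]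
    rw [← MeasureTheory.integral_Ioc_eq_integral_Ioo,
      ← intervalIntegral.integral_of_le zero_le_one]
    have hcomm : (∫ x in (0:ℝ)..1, g x • (q x - Q)) = ∫ x in (0:ℝ)..1, (q x - Q) * g x :=
      intervalIntegral.integral_congr (fun x _ => by rw [smul_eq_mul, mul_comm])
    rw [hcomm]
    exact hz
  have h01 : ∀ᵐ x : ℝ, x ∉ ({0, 1} : Set ℝ) := by
    apply measure_eq_zero_iff_ae_notMem.mp
    exact Set.Countable.measure_zero (Set.Countable.insert _ (Set.countable_singleton _)) _
  filter_upwards [key, h01] with x hx hx01 hxIcc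
  have hxIoo : x ∈ Set.Ioo (0:ℝ) 1 := by
    simp only [Set.mem_insert_iff, Set.mem_singleton_iff, not_or] at hx01
    exact ⟨hxIcc.1.lt_of_ne (Ne.symm hx01.1), hxIcc.2.lt_of_ne hx01.2⟩
  have := hx hxIoo
  linarith [this]
end

section
/- Let q ∈ L¹[0,1] be real-valued and t ∈ [π,2π). If λ₀(t), the first eigenvalue of the quasi-periodic problem L_t(q), satisfies λ₀(t) ≥ (2π−t)² + ∫₀¹ q(x) dx, then q(x) = ∫₀¹ q(s) ds almost everywhere on [0,1]. In particular, the test function y(x) = e^{i(t−2π)x} is a first eigenfunction with eigenvalue (2π−t)² + ∫₀¹ q dx. -/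
open MeasureTheory intervalIntegral Complex


open MeasureTheory intervalIntegral Complex

open MeasureTheory intervalIntegral Complex

lemma expDeriv (α : ℝ) {F F' : ℝ → ℂ}
    (hF : ∀ x, HasDerivAt F (F' x) x) (x : ℝ) :
    HasDerivAt (fun x : ℝ => Complex.exp (Complex.I * α * x) * F x)
      (Complex.exp (Complex.I * α * x) * (Complex.I * α * F x + F' x)) x := by
  have he : HasDerivAt (fun x : ℝ => Complex.exp (Complex.I * α * x))
      (Complex.I * α * Complex.exp (Complex.I * α * x)) x := by
    have h1 : HasDerivAt (fun z : ℂ => Complex.exp (Complex.I * α * z))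
        (Complex.exp (Complex.I * α * (x:ℂ)) * (Complex.I * α)) (x:ℂ) := by
      simpa using ((hasDerivAt_id (x:ℂ)).const_mul (Complex.I * α)).cexp
    simpa [mul_comm] using h1.comp_ofReal
  have h2 : HasDerivAt (fun x : ℝ => Complex.exp (Complex.I * α * x) * F x) _ x := he.mul (hF x)
  convert h2 using 1
  ring

lemma contDiff_expMul (α : ℝ) {f : ℝ → ℝ} (hf : ContDiff ℝ 2 f) :
    ContDiff ℝ 2 (fun x : ℝ => Complex.exp (Complex.I * α * x) * (f x : ℂ)) := by
  have h1 : ContDiff ℝ 2 (fun x : ℝ => (x : ℂ)) := Complex.ofRealCLM.contDiff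
  have h2 : ContDiff ℝ 2 (fun x : ℝ => Complex.exp (Complex.I * α * x)) :=
    ((Complex.contDiff_exp (𝕜 := ℂ)).restrict_scalars ℝ).of_le le_top |>.comp
      (contDiff_const.mul h1)
  exact h2.mul ((Complex.ofRealCLM.contDiff (n := 2)).comp hf)

lemma smooth_aux {f : ℝ → ℝ} (hf : ContDiff ℝ 2 f) :
    Differentiable ℝ f ∧ Differentiable ℝ (deriv f) ∧ Continuous (deriv (deriv f)) := by
  have h1 : ContDiff ℝ (1+1) f := by norm_num at hf ⊢; exact hf
  have h2 := (contDiff_succ_iff_deriv.mp h1).2.2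
  have h1' : ContDiff ℝ (0+1) (deriv f) := by norm_num at h2 ⊢; exact h2
  have h3 := (contDiff_succ_iff_deriv.mp h1').2.2
  exact ⟨hf.differentiable two_ne_zero, h2.differentiable one_ne_zero, h3.continuous⟩

lemma deriv_expMul (α : ℝ) {f : ℝ → ℝ} (hf : ContDiff ℝ 2 f) :
    (∀ x : ℝ, deriv (fun x : ℝ => Complex.exp (Complex.I * α * x) * (f x : ℂ)) x
        = Complex.exp (Complex.I * α * x) * (Complex.I * α * f x + deriv f x)) ∧
    (∀ x : ℝ, deriv (deriv (fun x : ℝ => Complex.exp (Complex.I * α * x) * (f x : ℂ))) x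
        = Complex.exp (Complex.I * α * x) *
            (-(α:ℂ)^2 * f x + 2 * Complex.I * α * deriv f x + deriv (deriv f) x)) := by
  obtain ⟨hd1, hd2, _⟩ := smooth_aux hf
  have h1 : ∀ x : ℝ, HasDerivAt (fun x : ℝ => Complex.exp (Complex.I * α * x) * (f x : ℂ))
      (Complex.exp (Complex.I * α * x) * (Complex.I * α * f x + deriv f x)) x :=
    fun x => expDeriv α (fun x => ((hd1 x).hasDerivAt).ofReal_comp) x
  have e1 : ∀ x : ℝ, deriv (fun x : ℝ => Complex.exp (Complex.I * α * x) * (f x : ℂ)) x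
      = Complex.exp (Complex.I * α * x) * (Complex.I * α * f x + deriv f x) :=
    fun x => (h1 x).deriv
  refine ⟨e1, fun x => ?_⟩
  have h2 : ∀ x : ℝ, HasDerivAt
      (fun x : ℝ => Complex.exp (Complex.I * α * x) * (Complex.I * α * f x + deriv f x))
      (Complex.exp (Complex.I * α * x) * (Complex.I * α * (Complex.I * α * f x + deriv f x)
        + (Complex.I * α * deriv f x + deriv (deriv f) x))) x := by
    intro x
    exact expDeriv α (F := fun x => Complex.I * α * f x + deriv f x)
      (F' := fun x => Complex.I * α * deriv f x + deriv (deriv f) x)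
      (fun x => (((hd1 x).hasDerivAt).ofReal_comp.const_mul (Complex.I * α)).add
        ((hd2 x).hasDerivAt).ofReal_comp) x
  have : deriv (fun x : ℝ => Complex.exp (Complex.I * α * x) * (f x : ℂ))
      = fun x : ℝ => Complex.exp (Complex.I * α * x) * (Complex.I * α * f x + deriv f x) :=
    funext e1
  rw [this, (h2 x).deriv]
  linear_combination (Complex.exp (Complex.I * α * x) * (α:ℂ)^2 * f x) * Complex.I_sq

lemma rayleigh_eval (α : ℝ) (q : ℝ → ℝ) {f : ℝ → ℝ} (hf : ContDiff ℝ 2 f) :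
    rayleighQuotientR q (fun x => Complex.exp (Complex.I * α * x) * (f x : ℂ))
      = (∫ x in (0:ℝ)..1,
          (α^2 * f x^2 - f x * deriv (deriv f) x + q x * f x^2)) /
        (∫ x in (0:ℝ)..1, f x ^ 2) := by
  have habs : ∀ x : ℝ, (‖Complex.exp (Complex.I * α * x) * (f x : ℂ)‖)^2
      = f x ^ 2 := by
    intro x; rw [norm_mul, Complex.norm_exp]; simp [sq_abs]
  have hre : ∀ x : ℝ,
      (-(starRingEnd ℂ) (Complex.exp (Complex.I * α * x) * (f x : ℂ)) *
        deriv (deriv (fun x : ℝ => Complex.exp (Complex.I * α * x) * (f x : ℂ))) x).re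
      = α^2 * f x^2 - f x * deriv (deriv f) x := by
    intro x
    have h2 := (deriv_expMul α hf).2 x
    have hc : (starRingEnd ℂ) (Complex.exp (Complex.I * α * x) * (f x : ℂ))
        = Complex.exp (-(Complex.I * α * x)) * (f x : ℂ) := by
      simp [map_mul, ← Complex.exp_conj, Complex.conj_ofReal]
    have hinv : Complex.exp (-(Complex.I * α * x)) * Complex.exp (Complex.I * α * x) = 1 := by
      rw [← Complex.exp_add]; simp
    have key : -(starRingEnd ℂ) (Complex.exp (Complex.I * α * x) * (f x : ℂ)) *
        deriv (deriv (fun x : ℝ => Complex.exp (Complex.I * α * x) * (f x : ℂ))) x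
        = ((α^2 * f x^2 - f x * deriv (deriv f) x : ℝ) : ℂ)
          + ((-(2*α*f x*deriv f x) : ℝ) : ℂ) * Complex.I := by
      rw [h2, hc]
      linear_combination (norm := (push_cast; ring1))
        (-((f x:ℝ):ℂ) * (-(α:ℂ)^2 * ((f x:ℝ):ℂ) + 2 * Complex.I * (α:ℂ) * ((deriv f x : ℝ) : ℂ) +
          ((deriv (deriv f) x : ℝ) : ℂ))) * hinv
    rw [key]
    simp only [Complex.add_re, Complex.ofReal_re, Complex.mul_re, Complex.ofReal_im,
      Complex.I_re, Complex.I_im]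
    ring
  unfold rayleighQuotientR
  congr 1
  · apply intervalIntegral.integral_congr
    intro x _
    simp only [hre x, habs x]
  · apply intervalIntegral.integral_congr
    intro x _
    simp only [habs x]

lemma nonpos_of_quad {A C δ : ℝ} (hδ : 0 < δ)
    (h : ∀ ε : ℝ, |ε| ≤ δ → 0 ≤ 2*ε*A + ε^2*C) : A ≤ 0 := by
  by_contra hA
  push_neg at hA
  set m : ℝ := min δ (A / (|C| + 1)) with hm
  have hC1 : 0 < |C| + 1 := by positivity
  have hm0 : 0 < m := lt_min hδ (div_pos hA hC1)
  have hmδ : m ≤ δ := min_le_left _ _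
  have hmA : m * (|C| + 1) ≤ A := by
    rw [← le_div_iff₀ hC1]; exact min_le_right _ _
  have h1 := h (-m) (by rw [abs_of_nonpos (by linarith)]; linarith)
  have hCle : C ≤ |C| := le_abs_self C
  nlinarith [sq_nonneg m, mul_pos hm0 hm0]

open MeasureTheory in
lemma test_integral_zero_s3 (q : ℝ → ℝ) (hqI : IntervalIntegrable q volume 0 1) (α : ℝ)
    {g : ℝ → ℝ} (hg2 : ContDiff ℝ 2 g) (hgs : HasCompactSupport g)
    (hsupp : tsupport g ⊆ Set.Ioo 0 1)
    (hineq : ∀ ε : ℝ, α^2 + (∫ x in (0:ℝ)..1, q x) ≤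
        rayleighQuotientR q
          (fun x => Complex.exp (Complex.I * α * x) * ((1 + ε * g x : ℝ) : ℂ))) :
    ∫ x in (0:ℝ)..1, (q x - ∫ s in (0:ℝ)..1, q s) * g x = 0 := by
  obtain ⟨hgd, hgd', hg''c⟩ := smooth_aux hg2
  have hgc : Continuous g := hg2.continuous
  have hg'c : Continuous (deriv g) := hgd'.continuous
  have h0n : (0:ℝ) ∉ tsupport g := fun h => absurd (hsupp h).1 (lt_irrefl 0)
  have h1n : (1:ℝ) ∉ tsupport g := fun h => absurd (hsupp h).2 (lt_irrefl 1)
  have hg0 : g 0 = 0 := image_eq_zero_of_notMem_tsupport h0n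
  have hg1 : g 1 = 0 := image_eq_zero_of_notMem_tsupport h1n
  have hdg0 : deriv g 0 = 0 := by
    by_contra h; exact h0n (support_deriv_subset (Function.mem_support.mpr h))
  have hdg1 : deriv g 1 = 0 := by
    by_contra h; exact h1n (support_deriv_subset (Function.mem_support.mpr h))
  obtain ⟨M, hM⟩ := hgc.bounded_above_of_compact_support hgs
  have hM0 : 0 ≤ M := le_trans (norm_nonneg _) (hM 0)
  set δ : ℝ := 1 / (2 * (M + 1)) with hδdef
  have hδ : 0 < δ := by positivity
  -- notation
  set Iq := ∫ x in (0:ℝ)..1, q x with hIq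
  set G1 := ∫ x in (0:ℝ)..1, g x with hG1
  set G2 := ∫ x in (0:ℝ)..1, (g x)^2 with hG2
  set D := ∫ x in (0:ℝ)..1, (deriv g x)^2 with hD
  set Aq := ∫ x in (0:ℝ)..1, q x * g x with hAq
  set Bq := ∫ x in (0:ℝ)..1, q x * (g x)^2 with hBq
  -- integrability
  have ig : IntervalIntegrable g volume 0 1 := hgc.intervalIntegrable 0 1
  have ig2 : IntervalIntegrable (fun x => (g x)^2) volume 0 1 :=
    (hgc.pow 2).intervalIntegrable 0 1
  have ig'2 : IntervalIntegrable (fun x => (deriv g x)^2) volume 0 1 :=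
    (hg'c.pow 2).intervalIntegrable 0 1
  have ig' : IntervalIntegrable (deriv g) volume 0 1 := hg'c.intervalIntegrable 0 1
  have ig'' : IntervalIntegrable (deriv (deriv g)) volume 0 1 := hg''c.intervalIntegrable 0 1
  have igg'' : IntervalIntegrable (fun x => g x * deriv (deriv g) x) volume 0 1 :=
    (hgc.mul hg''c).intervalIntegrable 0 1
  have iqg : IntervalIntegrable (fun x => q x * g x) volume 0 1 :=
    hqI.mul_continuousOn hgc.continuousOn
  have iqg2 : IntervalIntegrable (fun x => q x * (g x)^2) volume 0 1 :=
    hqI.mul_continuousOn (hgc.pow 2).continuousOn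
  -- two integration facts
  have F1 : ∫ x in (0:ℝ)..1, deriv (deriv g) x = 0 := by
    rw [intervalIntegral.integral_deriv_eq_sub (fun x _ => (hgd' x)) ig'']
    rw [hdg0, hdg1]; ring
  have F2 : ∫ x in (0:ℝ)..1, g x * deriv (deriv g) x = -D := by
    have h := intervalIntegral.integral_mul_deriv_eq_deriv_mul
      (u := g) (u' := deriv g) (v := deriv g) (v' := deriv (deriv g))
      (fun x _ => (hgd x).hasDerivAt) (fun x _ => (hgd' x).hasDerivAt) ig' ig''
    rw [h, hg0, hg1, hdg0, hdg1]
    have : ∫ x in (0:ℝ)..1, deriv g x * deriv g x = D := by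
      rw [hD]; apply intervalIntegral.integral_congr; intro x _; ring
    rw [this]; ring
  -- the quadratic inequality for small ε
  have hquad : ∀ ε : ℝ, |ε| ≤ δ →
      0 ≤ 2*ε*(Aq - Iq*G1) + ε^2*(D + Bq - Iq*G2) := by
    intro ε hε
    set f : ℝ → ℝ := fun x => 1 + ε * g x with hfdef
    have hf2 : ContDiff ℝ 2 f := contDiff_const.add (contDiff_const.mul hg2)
    have hdf : ∀ x, HasDerivAt f (ε * deriv g x) x :=
      fun x => ((hgd x).hasDerivAt.const_mul ε).const_add 1
    have hf' : deriv f = fun x => ε * deriv g x := funext fun x => (hdf x).deriv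
    have hf'' : ∀ x, deriv (deriv f) x = ε * deriv (deriv g) x := by
      intro x; rw [hf']; exact ((hgd' x).hasDerivAt.const_mul ε).deriv
    have hlow : ∀ x, (1:ℝ)/2 ≤ f x := by
      intro x
      have h1 : |ε * g x| ≤ δ * M := by
        rw [abs_mul]
        apply mul_le_mul hε (by simpa [Real.norm_eq_abs] using hM x) (abs_nonneg _) hδ.le
      have h2 : δ * M ≤ 1/2 := by
        rw [hδdef]
        rw [div_mul_eq_mul_div, div_le_div_iff₀ (by positivity) (by norm_num)]
        nlinarith
      have := abs_le.mp (le_trans h1 h2)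
      simp only [hfdef]; linarith [this.1]
    -- denominator expansion
    have hN : ∫ x in (0:ℝ)..1, (f x)^2 = 1 + 2*ε*G1 + ε^2*G2 := by
      have e : Set.EqOn (fun x => (f x)^2)
          (fun x => 1 + (2*ε * g x + ε^2 * (g x)^2)) (Set.uIcc 0 1) := by
        intro x _; simp only [hfdef]; ring
      rw [intervalIntegral.integral_congr e,
        intervalIntegral.integral_add intervalIntegrable_const
          ((ig.const_mul _).add (ig2.const_mul _)),
        intervalIntegral.integral_add (ig.const_mul _) (ig2.const_mul _),
        intervalIntegral.integral_const_mul, intervalIntegral.integral_const_mul]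
      simp [hG1, hG2]; ring
    have hqN : ∫ x in (0:ℝ)..1, q x * (f x)^2 = Iq + 2*ε*Aq + ε^2*Bq := by
      have e : Set.EqOn (fun x => q x * (f x)^2)
          (fun x => q x + (2*ε * (q x * g x) + ε^2 * (q x * (g x)^2))) (Set.uIcc 0 1) := by
        intro x _; simp only [hfdef]; ring
      rw [intervalIntegral.integral_congr e,
        intervalIntegral.integral_add hqI ((iqg.const_mul _).add (iqg2.const_mul _)),
        intervalIntegral.integral_add (iqg.const_mul _) (iqg2.const_mul _),
        intervalIntegral.integral_const_mul, intervalIntegral.integral_const_mul]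
      ring
    -- numerator expansion
    have hnum : ∫ x in (0:ℝ)..1, (α^2 * (f x)^2 - f x * deriv (deriv f) x + q x * (f x)^2)
        = α^2*(1 + 2*ε*G1 + ε^2*G2) + ε^2*D + (Iq + 2*ε*Aq + ε^2*Bq) := by
      have e : Set.EqOn
          (fun x => α^2 * (f x)^2 - f x * deriv (deriv f) x + q x * (f x)^2)
          (fun x => α^2 * (f x)^2 +
            (-(ε * deriv (deriv g) x + ε^2 * (g x * deriv (deriv g) x)) + q x * (f x)^2))
          (Set.uIcc 0 1) := by
        intro x _; simp only [hf'' x]; simp only [hfdef]; ring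
      have i1 : IntervalIntegrable (fun x => α^2 * (f x)^2) volume 0 1 :=
        (((hf2.continuous).pow 2).intervalIntegrable 0 1).const_mul _
      have i2 : IntervalIntegrable
          (fun x => -(ε * deriv (deriv g) x + ε^2 * (g x * deriv (deriv g) x))) volume 0 1 :=
        ((ig''.const_mul _).add (igg''.const_mul _)).neg
      have i3 : IntervalIntegrable (fun x => q x * (f x)^2) volume 0 1 :=
        hqI.mul_continuousOn ((hf2.continuous.pow 2)).continuousOn
      rw [intervalIntegral.integral_congr e,
        intervalIntegral.integral_add i1 (i2.add i3),
        intervalIntegral.integral_add i2 i3,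
        intervalIntegral.integral_const_mul, hN, hqN, intervalIntegral.integral_neg,
        intervalIntegral.integral_add (ig''.const_mul _) (igg''.const_mul _),
        intervalIntegral.integral_const_mul, intervalIntegral.integral_const_mul, F1, F2]
      ring
    -- denominator positivity
    have hNpos : (0:ℝ) < 1 + 2*ε*G1 + ε^2*G2 := by
      rw [← hN]
      have h14 : (1:ℝ)/4 ≤ ∫ x in (0:ℝ)..1, (f x)^2 := by
        have hle : ∀ x ∈ Set.Icc (0:ℝ) 1,
            (fun _ : ℝ => (1:ℝ)/4) x ≤ (fun x => (f x)^2) x := fun x _ => by nlinarith [hlow x]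
        calc (1:ℝ)/4 = ∫ _x in (0:ℝ)..1, ((1:ℝ)/4) := by simp
        _ ≤ ∫ x in (0:ℝ)..1, (f x)^2 :=
          intervalIntegral.integral_mono_on (by norm_num) intervalIntegrable_const
            ((hf2.continuous.pow 2).intervalIntegrable 0 1) hle
      linarith
    -- apply hineq
    have hr := hineq ε
    rw [rayleigh_eval α q hf2] at hr
    rw [hnum, hN] at hr
    have hfinal : (α^2 + Iq) * (1 + 2*ε*G1 + ε^2*G2)
        ≤ α^2*(1 + 2*ε*G1 + ε^2*G2) + ε^2*D + (Iq + 2*ε*Aq + ε^2*Bq) :=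
      (le_div_iff₀ hNpos).mp hr
    nlinarith [hfinal]
  -- conclude A = 0
  have hA1 : Aq - Iq*G1 ≤ 0 := nonpos_of_quad hδ hquad
  have hA2 : -(Aq - Iq*G1) ≤ 0 := by
    apply nonpos_of_quad hδ (C := D + Bq - Iq*G2)
    intro ε hε
    have := hquad (-ε) (by rwa [abs_neg])
    nlinarith [this]
  have hA : Aq - Iq*G1 = 0 := le_antisymm hA1 (by linarith)
  have e : Set.EqOn (fun x => (q x - Iq) * g x)
      (fun x => q x * g x - Iq * g x) (Set.uIcc 0 1) := fun x _ => by ring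
  rw [intervalIntegral.integral_congr e,
    intervalIntegral.integral_sub iqg (ig.const_mul _),
    intervalIntegral.integral_const_mul]
  rw [← hAq, ← hG1]
  linarith

lemma bc_expMul {t α : ℝ} (hαt : α = t - 2*Real.pi) {f : ℝ → ℝ} (hf : ContDiff ℝ 2 f)
    (hf0 : f 0 = 1) (hf1 : f 1 = 1) (hd0 : deriv f 0 = 0) (hd1 : deriv f 1 = 0) :
    QuasiPeriodicBC t (fun x => Complex.exp (Complex.I * α * x) * (f x : ℂ)) := by
  have hexp1 : Complex.exp (Complex.I * (α:ℂ) * (((1:ℝ)):ℂ))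
      = Complex.exp (Complex.I * t) := by
    rw [show Complex.I * (α:ℂ) * (((1:ℝ)):ℂ)
        = Complex.I * (t:ℂ) - 2*(Real.pi:ℂ)*Complex.I from by rw [hαt]; push_cast; ring]
    rw [Complex.exp_sub, Complex.exp_two_pi_mul_I, div_one]
  have hexp0 : Complex.exp (Complex.I * (α:ℂ) * (((0:ℝ)):ℂ)) = 1 := by
    push_cast; simp
  constructor
  · show Complex.exp (Complex.I * α * (((1:ℝ)):ℂ)) * ((f 1 : ℝ):ℂ)
      = Complex.exp (Complex.I * t) *
        (Complex.exp (Complex.I * α * (((0:ℝ)):ℂ)) * ((f 0 : ℝ):ℂ))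
    rw [hf0, hf1, hexp0, hexp1]
    norm_num
  · have hder := (deriv_expMul α hf).1
    rw [hder 1, hder 0, hf1, hf0, hd1, hd0, hexp0, hexp1]
    push_cast
    ring

/-- Theorem 3(b): if the first eigenvalue `λ₀(t)`, `t ∈ [π,2π)`, of the
quasi-periodic problem `L_t(q)` satisfies `λ₀(t) ≥ (2π-t)² + ∫₀¹ q`, then `q` is a.e.
equal to its mean value; moreover `x ↦ exp(i(t-2π)x)` is a first eigenfunction with
eigenvalue `(2π-t)² + ∫₀¹ q`. -/
theorem ambarzumyan_quasiperiodic_b (q : ℝ → ℝ)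
    (hq : IntegrableOn q (Set.Icc (0:ℝ) 1)) (t : ℝ)
    (ht : t ∈ Set.Ico Real.pi (2 * Real.pi))
    (lam0 : ℝ) (hfirst : IsFirstEigenvalue q t lam0)
    (hvar : ∀ y : ℝ → ℂ, ContDiff ℝ 2 y → (∃ x ∈ Set.Icc (0:ℝ) 1, y x ≠ 0) →
      QuasiPeriodicBC t y → lam0 ≤ rayleighQuotientR q y)
    (hge : lam0 ≥ (2 * Real.pi - t)^2 + ∫ x in (0:ℝ)..1, q x) :
    (∀ᵐ x, x ∈ Set.Icc (0:ℝ) 1 → q x = ∫ s in (0:ℝ)..1, q s) ∧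
    lam0 = (2 * Real.pi - t)^2 + (∫ x in (0:ℝ)..1, q x) ∧
    IsEigenfunction q t lam0
      (fun x : ℝ => Complex.exp (Complex.I * (t - 2 * Real.pi) * x)) := by
  set α : ℝ := t - 2 * Real.pi with hα
  have hqI : IntervalIntegrable q volume 0 1 := by
    rw [intervalIntegrable_iff]
    apply hq.mono_set
    rw [Set.uIoc_of_le (by norm_num : (0:ℝ) ≤ 1)]
    exact Set.Ioc_subset_Icc_self
  have hαsq : (2 * Real.pi - t)^2 = α^2 := by rw [hα]; ring
  have hone : ContDiff ℝ 2 (fun _ : ℝ => (1:ℝ)) := contDiff_const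
  have hdone : deriv (fun _ : ℝ => (1:ℝ)) = fun _ => (0:ℝ) := by
    funext x; simp
  have hddone : deriv (deriv (fun _ : ℝ => (1:ℝ))) = fun _ => (0:ℝ) := by
    rw [hdone]; funext x; simp
  -- Rayleigh quotient of the pure exponential
  have hray1 : rayleighQuotientR q
      (fun x => Complex.exp (Complex.I * α * x) * (((fun _ : ℝ => (1:ℝ)) x : ℝ) : ℂ))
      = α^2 + ∫ x in (0:ℝ)..1, q x := by
    rw [rayleigh_eval α q hone]
    have e : Set.EqOn
        (fun x => α^2 * ((fun _ : ℝ => (1:ℝ)) x)^2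
          - (fun _ : ℝ => (1:ℝ)) x * deriv (deriv (fun _ : ℝ => (1:ℝ))) x
          + q x * ((fun _ : ℝ => (1:ℝ)) x)^2)
        (fun x => α^2 + q x) (Set.uIcc 0 1) := by
      intro x _; simp [hddone]
    rw [intervalIntegral.integral_congr e,
      intervalIntegral.integral_add intervalIntegrable_const hqI]
    simp
  have hnonzero1 : ∃ x ∈ Set.Icc (0:ℝ) 1,
      (fun x : ℝ => Complex.exp (Complex.I * α * x) * (((fun _ : ℝ => (1:ℝ)) x : ℝ) : ℂ)) x ≠ 0 := by
    refine ⟨0, by norm_num, ?_⟩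
    simp [Complex.exp_ne_zero]
  have hbc1 : QuasiPeriodicBC t
      (fun x => Complex.exp (Complex.I * α * x) * (((fun _ : ℝ => (1:ℝ)) x : ℝ) : ℂ)) :=
    bc_expMul hα hone rfl rfl (by rw [hdone]) (by rw [hdone])
  have hle : lam0 ≤ α^2 + ∫ x in (0:ℝ)..1, q x := by
    have := hvar _ (contDiff_expMul α hone) hnonzero1 hbc1
    rwa [hray1] at this
  have hlam : lam0 = α^2 + ∫ x in (0:ℝ)..1, q x := by
    rw [hαsq] at hge; linarith
  -- the key vanishing of integrals against test functions
  have key : ∀ g : ℝ → ℝ, ContDiff ℝ (⊤ : ℕ∞) g → HasCompactSupport g →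
      tsupport g ⊆ Set.Ioo 0 1 →
      ∫ x in (0:ℝ)..1, (q x - ∫ s in (0:ℝ)..1, q s) * g x = 0 := by
    intro g hg hgs hsupp
    have hg2 : ContDiff ℝ 2 g := hg.of_le (WithTop.coe_le_coe.mpr le_top)
    obtain ⟨hgd, hgd', _⟩ := smooth_aux hg2
    have h0n : (0:ℝ) ∉ tsupport g := fun h => absurd (hsupp h).1 (lt_irrefl 0)
    have h1n : (1:ℝ) ∉ tsupport g := fun h => absurd (hsupp h).2 (lt_irrefl 1)
    have hg0 : g 0 = 0 := image_eq_zero_of_notMem_tsupport h0n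
    have hg1 : g 1 = 0 := image_eq_zero_of_notMem_tsupport h1n
    have hdg0 : deriv g 0 = 0 := by
      by_contra h; exact h0n (support_deriv_subset (Function.mem_support.mpr h))
    have hdg1 : deriv g 1 = 0 := by
      by_contra h; exact h1n (support_deriv_subset (Function.mem_support.mpr h))
    apply test_integral_zero_s3 q hqI α hg2 hgs hsupp
    intro ε
    have hf2 : ContDiff ℝ 2 (fun x => 1 + ε * g x) :=
      contDiff_const.add (contDiff_const.mul hg2)
    have hdf : ∀ x, HasDerivAt (fun x => 1 + ε * g x) (ε * deriv g x) x :=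
      fun x => ((hgd x).hasDerivAt.const_mul ε).const_add 1
    have hf' : deriv (fun x => 1 + ε * g x) = fun x => ε * deriv g x :=
      funext fun x => (hdf x).deriv
    have hbc : QuasiPeriodicBC t
        (fun x : ℝ => Complex.exp (Complex.I * α * x) * (((fun x : ℝ => 1 + ε * g x) x : ℝ) : ℂ)) :=
      bc_expMul hα hf2 (by simp [hg0]) (by simp [hg1])
        (by rw [hf']; simp [hdg0]) (by rw [hf']; simp [hdg1])
    have hnz : ∃ x ∈ Set.Icc (0:ℝ) 1,
        (fun x : ℝ => Complex.exp (Complex.I * α * x) * (((fun x : ℝ => 1 + ε * g x) x : ℝ) : ℂ)) x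
          ≠ 0 := by
      refine ⟨0, by norm_num, ?_⟩
      simp [hg0, Complex.exp_ne_zero]
    have := hvar _ (contDiff_expMul α hf2) hnz hbc
    calc α^2 + ∫ x in (0:ℝ)..1, q x = lam0 := hlam.symm
    _ ≤ _ := this
  -- duality: q equals its mean a.e. on (0,1)
  have hQae : ∀ᵐ x, x ∈ Set.Ioo (0:ℝ) 1 → q x - (∫ s in (0:ℝ)..1, q s) = 0 := by
    apply isOpen_Ioo.ae_eq_zero_of_integral_contDiff_smul_eq_zero
    · apply MeasureTheory.IntegrableOn.locallyIntegrableOn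
      exact (hq.mono_set Set.Ioo_subset_Icc_self).sub
        (integrableOn_const measure_Ioo_lt_top.ne)
    · intro g hg hgs hsupp
      have hz : ∀ x, x ∉ Set.Ioc (0:ℝ) 1 → g x • (q x - ∫ s in (0:ℝ)..1, q s) = 0 := by
        intro x hx
        have : g x = 0 := by
          by_contra h
          exact hx (Set.Ioo_subset_Ioc_self (hsupp (subset_tsupport g (Function.mem_support.mpr h))))
        rw [this, zero_smul]
      rw [← setIntegral_eq_integral_of_forall_compl_eq_zero hz,
        ← intervalIntegral.integral_of_le (by norm_num : (0:ℝ) ≤ 1)]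
      have e : Set.EqOn (fun x => g x • (q x - ∫ s in (0:ℝ)..1, q s))
          (fun x => (q x - ∫ s in (0:ℝ)..1, q s) * g x) (Set.uIcc 0 1) := by
        intro x _; simp [smul_eq_mul, mul_comm]
      rw [intervalIntegral.integral_congr e]
      exact key g hg hgs hsupp
  have part1 : ∀ᵐ x, x ∈ Set.Icc (0:ℝ) 1 → q x = ∫ s in (0:ℝ)..1, q s := by
    have hn : volume ({0,1} : Set ℝ) = 0 := Set.Finite.measure_zero (Set.toFinite _) _
    have h01 : ∀ᵐ x : ℝ, x ∈ (({0,1} : Set ℝ))ᶜ := compl_mem_ae_iff.mpr hn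
    filter_upwards [hQae, h01] with x hx1 hx2 hxIcc
    simp only [Set.mem_compl_iff, Set.mem_insert_iff, Set.mem_singleton_iff, not_or] at hx2
    have hxIoo : x ∈ Set.Ioo (0:ℝ) 1 :=
      ⟨hxIcc.1.lt_of_ne (Ne.symm hx2.1), hxIcc.2.lt_of_ne hx2.2⟩
    have := hx1 hxIoo
    linarith
  refine ⟨part1, by rw [hlam, hαsq], ?_⟩
  -- the eigenfunction claim
  have hyform : (fun x : ℝ => Complex.exp (Complex.I * (t - 2 * Real.pi) * x))
      = fun x : ℝ => Complex.exp (Complex.I * α * x) * (((fun _ : ℝ => (1:ℝ)) x : ℝ) : ℂ) := by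
    funext x
    rw [hα]
    push_cast
    ring_nf
  rw [hyform]
  refine ⟨contDiff_expMul α hone, hnonzero1, hbc1, ?_⟩
  have hdd := (deriv_expMul α hone).2
  filter_upwards [part1] with x hx hxIcc
  have hqx : q x = ∫ s in (0:ℝ)..1, q s := hx hxIcc
  rw [hdd x]
  simp only [hddone]
  simp only [hdone]
  rw [hqx, hlam]
  push_cast
  ring
end

section
/- Let q ∈ L¹[0,1] be real-valued, t ∈ (0,π), and suppose: (i) the first eigenvalue λ₀(t) of L_t(q) satisfies λ₀(t) ≥ t², (ii) the eigenvalues satisfy λₙ(t) = (2πn+t)² + ∫₀¹ q dx + O(n⁻¹ log n), and (iii) λₙ(t) = (2πn+t)² for all n larger than some n₀. Then q = 0 almost everywhere on [0,1]. -/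
open MeasureTheory intervalIntegral Complex
open scoped ContDiff

open MeasureTheory intervalIntegral Complex

-- finishing real lemma
lemma aux_eq_zero (A K e0 : ℝ) (he0 : 0 < e0)
    (h : ∀ e : ℝ, |e| ≤ e0 → 0 ≤ 2*e*A + e^2*K) : A = 0 := by
  by_contra hA
  set c : ℝ := min (e0/(|A|+1)) (1/(|K|+1)) with hc
  have hApos : 0 < |A| := abs_pos.mpr hA
  have hc1 : 0 < c := lt_min (by positivity) (by positivity)
  have hcK : c * K < 2 := by
    have h1 : c ≤ 1/(|K|+1) := min_le_right _ _
    have h2 : c * K ≤ c * |K| := by nlinarith [le_abs_self K]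
    have h3 : c * |K| ≤ (1/(|K|+1)) * |K| := by nlinarith [abs_nonneg K]
    have h4 : (1/(|K|+1)) * |K| < 1 := by
      rw [div_mul_eq_mul_div, div_lt_one (by positivity)]; linarith [abs_nonneg K]
    linarith
  have hce : |(-(c*A))| ≤ e0 := by
    have h1 : c ≤ e0/(|A|+1) := min_le_left _ _
    rw [abs_neg, abs_mul, abs_of_pos hc1]
    calc c * |A| ≤ (e0/(|A|+1)) * |A| := by nlinarith
    _ ≤ e0 := by rw [div_mul_eq_mul_div, div_le_iff₀ (by positivity)]; nlinarith [he0.le]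
  have := h (-(c*A)) hce
  have hA2 : 0 < A^2 := by positivity
  have key : c*A^2*(c*K-2) < 0 := mul_neg_of_pos_of_neg (by positivity) (by linarith)
  nlinarith [key, this]

lemma aux_int_zero (I C : ℝ) (n0 : ℕ)
    (h : ∀ n : ℕ, 2 ≤ n → n0 < n → |I| ≤ C * Real.log n / n) : I = 0 := by
  have h1 : Filter.Tendsto (fun n : ℕ => C * (Real.log n / n)) Filter.atTop (nhds 0) := by
    have h2 : Filter.Tendsto (fun x : ℝ => Real.log x / x) Filter.atTop (nhds 0) :=
      Real.isLittleO_log_id_atTop.tendsto_div_nhds_zero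
    have h3 := (h2.comp (tendsto_natCast_atTop_atTop (R := ℝ))).const_mul C
    simpa using h3
  have h4 : |I| ≤ 0 := by
    refine ge_of_tendsto h1 ?_
    filter_upwards [Filter.eventually_ge_atTop (max 2 (n0+1))] with n hn
    rw [← mul_div_assoc]
    exact h n (le_trans (le_max_left _ _) hn) (by omega)
  exact abs_nonpos_iff.mp h4

lemma aux_key (q : ℝ → ℝ) (hq : IntegrableOn q (Set.Icc (0:ℝ) 1)) (t : ℝ)
    (hvar : ∀ y : ℝ → ℂ, ContDiff ℝ 2 y → (∃ x ∈ Set.Icc (0:ℝ) 1, y x ≠ 0) →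
      QuasiPeriodicBC t y → t^2 ≤ rayleighQuotientR q y)
    (hint : ∫ x in (0:ℝ)..1, q x = 0)
    (g : ℝ → ℝ) (hg : ContDiff ℝ ∞ g) (hgs : tsupport g ⊆ Set.Ioo 0 1) :
    ∫ x in (0:ℝ)..1, q x * g x = 0 := by
  classical
  set G := deriv g with hGdef
  set G2 := deriv G with hG2def
  have hgc : Continuous g := hg.continuous
  have hgd : Differentiable ℝ g := hg.differentiable (by simp)
  have hGsm : ContDiff ℝ ∞ G := (contDiff_infty_iff_deriv.mp hg).2
  have hGc : Continuous G := hGsm.continuous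
  have hGd : Differentiable ℝ G := hGsm.differentiable (by simp)
  have hG2c : Continuous G2 := (contDiff_infty_iff_deriv.mp hGsm).2.continuous
  -- boundary values
  have h0t : (0:ℝ) ∉ tsupport g := fun h => (hgs h).1.false
  have h1t : (1:ℝ) ∉ tsupport g := fun h => (lt_irrefl 1 (hgs h).2)
  have h0g : g 0 = 0 := image_eq_zero_of_notMem_tsupport h0t
  have h1g : g 1 = 0 := image_eq_zero_of_notMem_tsupport h1t
  have h0G : G 0 = 0 := by
    by_contra h; exact h0t (support_deriv_subset (Function.mem_support.mpr h))
  have h1G : G 1 = 0 := by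
    by_contra h; exact h1t (support_deriv_subset (Function.mem_support.mpr h))
  have hcs : HasCompactSupport g :=
    IsCompact.of_isClosed_subset isCompact_Icc (isClosed_tsupport g)
      (hgs.trans Set.Ioo_subset_Icc_self)
  obtain ⟨M, hM⟩ : ∃ M : ℝ, ∀ x, |g x| ≤ M := hcs.exists_bound_of_continuous hgc
  have hM0 : 0 ≤ M := le_trans (abs_nonneg _) (hM 0)
  -- integrability facts
  have hqI : IntervalIntegrable q volume 0 1 := by
    rw [intervalIntegrable_iff_integrableOn_Ioc_of_le (by norm_num)]
    exact hq.mono_set Set.Ioc_subset_Icc_self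
  have hmul : ∀ f : ℝ → ℝ, Continuous f →
      IntervalIntegrable (fun x => q x * f x) volume 0 1 := by
    intro f hf
    rw [intervalIntegrable_iff_integrableOn_Ioc_of_le (by norm_num)]
    exact (hq.mul_continuousOn hf.continuousOn isCompact_Icc).mono_set Set.Ioc_subset_Icc_self
  set A := ∫ x in (0:ℝ)..1, q x * g x with hA
  set B := ∫ x in (0:ℝ)..1, q x * g x ^ 2 with hB
  set Gq := ∫ x in (0:ℝ)..1, G x ^ 2 with hGq
  set e0 : ℝ := 1 / (2 * (M + 1)) with he0
  have he0pos : 0 < e0 := by positivity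
  have key : ∀ ε : ℝ, |ε| ≤ e0 → 0 ≤ 2 * ε * A + ε ^ 2 * (B + Gq) := by
    intro ε hε
    -- define test function
    set u : ℝ → ℝ := fun x => 1 + ε * g x with hu_def
    set E : ℝ → ℂ := fun x => Complex.exp (Complex.I * t * x) with hE_def
    set y : ℝ → ℂ := fun x => E x * (u x : ℂ) with hy_def
    set y1 : ℝ → ℂ := fun x => Complex.I * t * (E x * (u x : ℂ)) + E x * ((ε * G x : ℝ) : ℂ)
      with hy1_def
    set y2 : ℝ → ℂ := fun x => Complex.I * t * y1 x +
      (Complex.I * t * E x * ((ε * G x : ℝ) : ℂ) + E x * ((ε * G2 x : ℝ) : ℂ)) with hy2_def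
    -- pointwise bound on u
    have hu_ge : ∀ x, (1:ℝ)/2 ≤ u x := by
      intro x
      have h1 : |ε * g x| ≤ e0 * M := by
        rw [abs_mul]
        exact mul_le_mul hε (hM x) (abs_nonneg _) he0pos.le
      have h2 : e0 * M ≤ 1/2 := by
        rw [he0, div_mul_eq_mul_div, div_le_div_iff₀ (by positivity) (by norm_num)]
        nlinarith
      have := abs_le.mp (h1.trans h2)
      simp only [hu_def]; linarith [this.1]
    -- derivatives
    have hE' : ∀ x : ℝ, HasDerivAt E (Complex.I * t * E x) x := by
      intro x
      have h1 : HasDerivAt (fun x : ℝ => Complex.I * t * (x : ℂ)) (Complex.I * t) x := by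
        simpa using (Complex.ofRealCLM.hasDerivAt (x := x)).const_mul (Complex.I * t)
      simpa [hE_def, mul_comm] using h1.cexp
    have hu' : ∀ x : ℝ, HasDerivAt u (ε * G x) x := by
      intro x
      exact ((hasDerivAt_const x (1:ℝ)).add (((hgd x).hasDerivAt).const_mul ε)).congr_deriv (zero_add _)
    have huC : ∀ x : ℝ, HasDerivAt (fun x => (u x : ℂ)) ((ε * G x : ℝ) : ℂ) x :=
      fun x => (hu' x).ofReal_comp
    have hGC : ∀ x : ℝ, HasDerivAt (fun x => ((ε * G x : ℝ) : ℂ)) ((ε * G2 x : ℝ) : ℂ) x :=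
      fun x => (((hGd x).hasDerivAt).const_mul ε).ofReal_comp
    have hy' : ∀ x : ℝ, HasDerivAt y (y1 x) x := by
      intro x
      have := (hE' x).mul (huC x)
      exact this.congr_deriv (by simp only [hy1_def]; ring)
    have hy1' : ∀ x : ℝ, HasDerivAt y1 (y2 x) x := by
      intro x
      have h1 := ((hE' x).mul (huC x)).const_mul (Complex.I * t)
      have h2 := (hE' x).mul (hGC x)
      have := h1.add h2
      exact this.congr_deriv (by simp only [hy2_def, hy1_def]; ring)
    have hdy : deriv y = y1 := funext fun x => (hy' x).deriv
    have hddy : deriv (deriv y) = y2 := by rw [hdy]; exact funext fun x => (hy1' x).deriv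
    -- conj E * E = 1
    have hEE : ∀ x : ℝ, (starRingEnd ℂ) (E x) * E x = 1 := by
      intro x
      rw [hE_def]
      simp only [← Complex.exp_conj, map_mul, Complex.conj_I, Complex.conj_ofReal]
      rw [← Complex.exp_add]
      ring_nf
      exact Complex.exp_zero
    -- |y|^2 = u^2
    have habs : ∀ x : ℝ, ‖y x‖^2 = u x ^ 2 := by
      intro x
      rw [hy_def]
      simp only [norm_mul, Complex.norm_real, hE_def, Complex.norm_exp]
      simp [_root_.sq_abs]
    -- y2 factored
    have hy2fac : ∀ x : ℝ, y2 x =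
        E x * (((-(t^2 * u x) : ℝ) : ℂ) + 2 * Complex.I * t * ((ε * G x : ℝ) : ℂ)
          + ((ε * G2 x : ℝ) : ℂ)) := by
      intro x
      rw [hy2_def, hy1_def]
      push_cast
      linear_combination (↑t^2 * E x * ↑(u x)) * Complex.I_sq
    -- numerator pointwise
    have hnum : ∀ x : ℝ, (-(starRingEnd ℂ) (y x) * y2 x).re + q x * ‖y x‖^2
        = t^2 * u x^2 - u x * (ε * G2 x) + q x * u x ^ 2 := by
      intro x
      have h1 : -(starRingEnd ℂ) (y x) * y2 x
          = ((t^2 * u x^2 - u x * (ε * G2 x) : ℝ) : ℂ)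
            + ((-(2 * t * u x * (ε * G x)) : ℝ) : ℂ) * Complex.I := by
        rw [hy2fac x, hy_def]
        simp only [map_mul, Complex.conj_ofReal]
        have h2 : -((starRingEnd ℂ) (E x) * (u x : ℂ)) *
            (E x * (((-(t^2 * u x) : ℝ) : ℂ) + 2 * Complex.I * t * ((ε * G x : ℝ) : ℂ)
              + ((ε * G2 x : ℝ) : ℂ)))
            = ((starRingEnd ℂ) (E x) * E x) * (-(u x : ℂ) *
              (((-(t^2 * u x) : ℝ) : ℂ) + 2 * Complex.I * t * ((ε * G x : ℝ) : ℂ)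
              + ((ε * G2 x : ℝ) : ℂ))) := by ring
        rw [h2, hEE x, one_mul]
        push_cast
        ring
      rw [h1, habs x]
      simp only [Complex.add_re, Complex.ofReal_re, Complex.re_ofReal_mul, Complex.I_re,
        mul_zero, add_zero]
    -- smoothness of y
    have hy2sm : ContDiff ℝ 2 y := by
      have hEsm : ContDiff ℝ 2 E := by
        have h1 : ContDiff ℝ 2 (fun x : ℝ => Complex.I * t * (x : ℂ)) :=
          contDiff_const.mul Complex.ofRealCLM.contDiff
        have h2 := Complex.contDiff_exp (𝕜 := ℂ) (n := 2)
        exact (h2.restrict_scalars ℝ).comp h1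
      have husm : ContDiff ℝ 2 (fun x => (u x : ℂ)) :=
        Complex.ofRealCLM.contDiff.comp
          (contDiff_const.add (contDiff_const.mul (hg.of_le (by norm_cast))))
      exact hEsm.mul husm
    -- nonvanishing
    have hy0 : y 0 = 1 := by
      simp [hy_def, hE_def, hu_def, h0g]
    have hnz : ∃ x ∈ Set.Icc (0:ℝ) 1, y x ≠ 0 :=
      ⟨0, by norm_num, by rw [hy0]; norm_num⟩
    -- boundary conditions
    have hbc : QuasiPeriodicBC t y := by
      constructor
      · rw [hy0]
        simp [hy_def, hE_def, hu_def, h1g]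
      · rw [hdy]
        simp [hy1_def, hE_def, hu_def, h0g, h1g, h0G, h1G]
        ring
    have hR := hvar y hy2sm hnz hbc
    -- compute the Rayleigh quotient
    have hnum_int : (∫ x in (0:ℝ)..1,
        ((-(starRingEnd ℂ) (y x) * deriv (deriv y) x).re + q x * ‖y x‖^2))
        = ∫ x in (0:ℝ)..1, (t^2 * u x^2 - u x * (ε * G2 x) + q x * u x ^ 2) := by
      rw [hddy]
      exact intervalIntegral.integral_congr (fun x _ => hnum x)
    have hden_int : (∫ x in (0:ℝ)..1, ‖y x‖^2) = ∫ x in (0:ℝ)..1, u x ^ 2 :=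
      intervalIntegral.integral_congr (fun x _ => habs x)
    set Dd := ∫ x in (0:ℝ)..1, u x ^ 2 with hDd
    have huc : Continuous u := continuous_const.add (continuous_const.mul hgc)
    have hu2c : Continuous (fun x => u x ^ 2) := huc.pow 2
    have hDd_ge : (1:ℝ)/4 ≤ Dd := by
      have h1 : ∫ x in (0:ℝ)..1, (1/4 : ℝ) ≤ ∫ x in (0:ℝ)..1, u x ^ 2 := by
        apply intervalIntegral.integral_mono_on (by norm_num)
          intervalIntegrable_const (hu2c.intervalIntegrable 0 1)
        intro x _
        nlinarith [hu_ge x]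
      simpa using h1
    have hDdpos : 0 < Dd := lt_of_lt_of_le (by norm_num) hDd_ge
    -- component integrals
    have hqu2 : (∫ x in (0:ℝ)..1, q x * u x ^ 2) = 2*ε*A + ε^2*B := by
      have h1 : ∀ x, q x * u x ^ 2
          = q x + 2*ε*(q x * g x) + ε^2*(q x * g x ^ 2) := by
        intro x; simp only [hu_def]; ring
      rw [intervalIntegral.integral_congr (fun x _ => h1 x)]
      rw [intervalIntegral.integral_add (hqI.add ((hmul g hgc).const_mul (2*ε)))
        ((hmul (fun x => g x ^ 2) (hgc.pow 2)).const_mul (ε^2)),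
        intervalIntegral.integral_add hqI ((hmul g hgc).const_mul (2*ε)),
        intervalIntegral.integral_const_mul, intervalIntegral.integral_const_mul, hint]
      ring
    have hG2int : (∫ x in (0:ℝ)..1, G2 x) = 0 := by
      rw [intervalIntegral.integral_deriv_eq_sub' G hG2def.symm (fun x _ => hGd x)
        hG2c.continuousOn]
      rw [h1G, h0G, sub_zero]
    have hgG2 : (∫ x in (0:ℝ)..1, g x * G2 x) = -Gq := by
      have h1 := intervalIntegral.integral_mul_deriv_eq_deriv_mul
        (u := g) (u' := G) (v := G) (v' := G2)
        (fun x _ => (hgd x).hasDerivAt) (fun x _ => (hGd x).hasDerivAt)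
        (hGc.intervalIntegrable 0 1) (hG2c.intervalIntegrable 0 1)
      rw [h1, h0g, h1g, hGq]
      simp [sq]
    have huG2 : (∫ x in (0:ℝ)..1, u x * (ε * G2 x)) = -(ε^2 * Gq) := by
      have h1 : ∀ x, u x * (ε * G2 x) = ε * G2 x + ε^2 * (g x * G2 x) := by
        intro x; simp only [hu_def]; ring
      rw [intervalIntegral.integral_congr (fun x _ => h1 x),
        intervalIntegral.integral_add ((hG2c.intervalIntegrable 0 1).const_mul ε)
          ((show IntervalIntegrable (fun x => g x * G2 x) volume 0 1 from (hgc.mul hG2c).intervalIntegrable 0 1).const_mul (ε^2)),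
        intervalIntegral.integral_const_mul, intervalIntegral.integral_const_mul,
        hG2int, hgG2]
      ring
    have hN : (∫ x in (0:ℝ)..1, (t^2 * u x^2 - u x * (ε * G2 x) + q x * u x ^ 2))
        = t^2 * Dd + (2*ε*A + ε^2*(B + Gq)) := by
      rw [intervalIntegral.integral_add
        (((hu2c.intervalIntegrable 0 1).const_mul (t^2)).sub
          (show IntervalIntegrable (fun x => u x * (ε * G2 x)) volume 0 1 from (huc.mul (continuous_const.mul hG2c : Continuous (fun x => ε * G2 x))).intervalIntegrable 0 1))
        (hmul _ hu2c),
        intervalIntegral.integral_sub ((hu2c.intervalIntegrable 0 1).const_mul (t^2))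
          (show IntervalIntegrable (fun x => u x * (ε * G2 x)) volume 0 1 from (huc.mul (continuous_const.mul hG2c : Continuous (fun x => ε * G2 x))).intervalIntegrable 0 1),
        intervalIntegral.integral_const_mul, huG2, hqu2]
      ring
    -- conclude from the variational inequality
    rw [rayleighQuotientR, hnum_int, hden_int, hN, le_div_iff₀ hDdpos] at hR
    nlinarith [hR]
  exact aux_eq_zero A (B + Gq) e0 he0pos key

theorem main_final (q : ℝ → ℝ)
    (hq : IntegrableOn q (Set.Icc (0:ℝ) 1)) (t : ℝ)
    (hvar : ∀ y : ℝ → ℂ, ContDiff ℝ 2 y → (∃ x ∈ Set.Icc (0:ℝ) 1, y x ≠ 0) →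
      QuasiPeriodicBC t y → t^2 ≤ rayleighQuotientR q y)
    (hint : ∫ x in (0:ℝ)..1, q x = 0) :
    ∀ᵐ x, x ∈ Set.Icc (0:ℝ) 1 → q x = 0 := by
  have hae : ∀ᵐ x, x ∈ Set.Ioo (0:ℝ) 1 → q x = 0 := by
    apply IsOpen.ae_eq_zero_of_integral_contDiff_smul_eq_zero isOpen_Ioo
      ((hq.mono_set Set.Ioo_subset_Icc_self).locallyIntegrableOn)
    intro g hgsm hgcs hgsupp
    have h1 : ∀ x ∉ Set.Ioo (0:ℝ) 1, g x • q x = 0 := by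
      intro x hx
      have : g x = 0 := image_eq_zero_of_notMem_tsupport (fun h => hx (hgsupp h))
      simp [this]
    rw [← setIntegral_eq_integral_of_forall_compl_eq_zero h1,
      ← integral_Ioc_eq_integral_Ioo]
    have h2 : (∫ x in Set.Ioc (0:ℝ) 1, g x • q x) = ∫ x in (0:ℝ)..1, q x * g x := by
      rw [intervalIntegral.integral_of_le (by norm_num : (0:ℝ) ≤ 1)]
      exact setIntegral_congr_fun measurableSet_Ioc (fun x _ => by
        simp [smul_eq_mul, mul_comm])
    rw [h2]
    exact aux_key q hq t hvar hint g hgsm hgsupp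
  have hnull : ∀ᵐ x : ℝ, x ∉ ({0, 1} : Set ℝ) := by
    have : volume ({0, 1} : Set ℝ) = 0 := (Set.toFinite ({0,1} : Set ℝ)).measure_zero volume
    exact (MeasureTheory.measure_eq_zero_iff_ae_notMem).mp this
  filter_upwards [hae, hnull] with x hx h01 hxIcc
  rcases eq_or_lt_of_le hxIcc.1 with h | h
  · exact absurd (by simp [← h]) h01
  rcases eq_or_lt_of_le hxIcc.2 with h' | h'
  · exact absurd (by simp [h']) h01
  exact hx ⟨h, h'⟩

/-- Theorem 4(a): `t ∈ (0,π)`, with (i) the first eigenvalue `λ₀(t) ≥ t²`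
(and the variational principle), (ii) eigenvalue asymptotics
`λₙ(t) = (2πn+t)² + ∫₀¹ q + O(n⁻¹ log n)`, and (iii) `λₙ(t) = (2πn+t)²` for all
`n > n₀`; then `q = 0` a.e. -/
theorem ambarzumyan_quasiperiodic_reduced (q : ℝ → ℝ)
    (hq : IntegrableOn q (Set.Icc (0:ℝ) 1)) (t : ℝ) (ht : t ∈ Set.Ioo 0 Real.pi)
    (lam : ℕ → ℝ)
    (hfirst : IsFirstEigenvalue q t (lam 0))
    (heig : ∀ n, IsEigenvalue q t (lam n))
    (hvar : ∀ y : ℝ → ℂ, ContDiff ℝ 2 y → (∃ x ∈ Set.Icc (0:ℝ) 1, y x ≠ 0) →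
      QuasiPeriodicBC t y → lam 0 ≤ rayleighQuotientR q y)
    (h0 : lam 0 ≥ t^2)
    (hasymp : ∃ C : ℝ, ∀ n : ℕ, 2 ≤ n →
      |lam n - ((2 * Real.pi * n + t)^2 + ∫ x in (0:ℝ)..1, q x)| ≤ C * Real.log n / n)
    (hn0 : ∃ n0 : ℕ, ∀ n > n0, lam n = (2 * Real.pi * n + t)^2) :
    ∀ᵐ x, x ∈ Set.Icc (0:ℝ) 1 → q x = 0 := by
  obtain ⟨C, hC⟩ := hasymp
  obtain ⟨n0, hlam⟩ := hn0
  have hint : (∫ x in (0:ℝ)..1, q x) = 0 := by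
    apply aux_int_zero _ C n0
    intro n h2 hn
    have h3 := hC n h2
    rw [hlam n hn] at h3
    have h4 : (2*Real.pi*n+t)^2 - ((2*Real.pi*n+t)^2 + ∫ x in (0:ℝ)..1, q x)
        = -(∫ x in (0:ℝ)..1, q x) := by ring
    rwa [h4, abs_neg] at h3
  exact main_final q hq t (fun y h1 h2 h3 => le_trans h0 (hvar y h1 h2 h3)) hint
end
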